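/- arXiv:1307.3068 — 6 statements merged into one kernel-verified Lean document; each statement's English description precedes it below -/
import Mathlib

section
/- Let n ≥ 3 and let H̃ : [0,Y] → ℝ be bounded. Then for sufficiently large M > 0 and sufficiently small Y > 0, there exists a unique continuous function q on (0,Y] with sup_{y∈(0,Y]} |q(y)/y| ≤ M satisfying the integral equation q(y) = y^{2-n} ∫₀^y { -(n-2) q(η)³ + (n-1) H̃(η) η (1 + q(η)²)^{3/2} } η^{n-3} dη for all y ∈ (0,Y]. -/
set_option maxHeartbeats 1000000

open MeasureTheory Set

namespace Stmt0Aux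

lemma rpow32 (x : ℝ) (hx : 0 ≤ x) : x ^ ((3:ℝ)/2) = Real.sqrt x ^ 3 := by
  rw [show ((3:ℝ)/2) = (1/2) * 3 by norm_num, Real.rpow_mul hx, ← Real.sqrt_eq_rpow,
    show (3:ℝ) = ((3:ℕ):ℝ) by norm_num, Real.rpow_natCast]

lemma sqrt_sq_self {x : ℝ} (hx : 0 ≤ x) : Real.sqrt x ^ 2 = x := Real.sq_sqrt hx

lemma lip32 {R v w : ℝ} (hR : 0 ≤ R) (hv : |v| ≤ R) (hw : |w| ≤ R) :
    |(1 + v ^ 2) ^ ((3:ℝ)/2) - (1 + w ^ 2) ^ ((3:ℝ)/2)| ≤ 3 * R * (1 + R ^ 2) * |v - w| := by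
  have hv2 : (0:ℝ) ≤ 1 + v ^ 2 := by positivity
  have hw2 : (0:ℝ) ≤ 1 + w ^ 2 := by positivity
  rw [rpow32 _ hv2, rpow32 _ hw2]
  set a := Real.sqrt (1 + v ^ 2) with ha
  set b := Real.sqrt (1 + w ^ 2) with hb
  have ha0 : 0 ≤ a := Real.sqrt_nonneg _
  have hb0 : 0 ≤ b := Real.sqrt_nonneg _
  have ha2 : a ^ 2 = 1 + v ^ 2 := sqrt_sq_self hv2
  have hb2 : b ^ 2 = 1 + w ^ 2 := sqrt_sq_self hw2
  have ha1 : 1 ≤ a := by nlinarith [sq_nonneg v]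
  have hb1 : 1 ≤ b := by nlinarith [sq_nonneg w]
  have hvR : v ^ 2 ≤ R ^ 2 := by nlinarith [abs_nonneg v, sq_abs v, abs_nonneg w]
  have hwR : w ^ 2 ≤ R ^ 2 := by nlinarith [sq_abs w, abs_nonneg w]
  have haR : a ^ 2 ≤ 1 + R ^ 2 := by nlinarith
  have hbR : b ^ 2 ≤ 1 + R ^ 2 := by nlinarith
  -- |a - b| ≤ R * |v - w|
  have hab : |a - b| ≤ R * |v - w| := by
    have h1 : |a - b| * 2 ≤ |a - b| * (a + b) := by
      have := abs_nonneg (a - b)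
      nlinarith
    have h2 : |a - b| * (a + b) = |v ^ 2 - w ^ 2| := by
      rw [show |v ^ 2 - w ^ 2| = |a ^ 2 - b ^ 2| by rw [ha2, hb2]; ring_nf]
      rw [show a ^ 2 - b ^ 2 = (a - b) * (a + b) by ring, abs_mul,
        abs_of_nonneg (by linarith : (0:ℝ) ≤ a + b)]
    have h3 : |v ^ 2 - w ^ 2| ≤ 2 * R * |v - w| := by
      rw [show v ^ 2 - w ^ 2 = (v - w) * (v + w) by ring, abs_mul]
      have : |v + w| ≤ 2 * R := (abs_add_le _ _).trans (by linarith)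
      calc |v - w| * |v + w| ≤ |v - w| * (2 * R) := by
            exact mul_le_mul_of_nonneg_left this (abs_nonneg _)
        _ = 2 * R * |v - w| := by ring
    nlinarith [abs_nonneg (v - w)]
  have hcube : |a ^ 3 - b ^ 3| ≤ 3 * (1 + R ^ 2) * |a - b| := by
    rw [show a ^ 3 - b ^ 3 = (a - b) * (a ^ 2 + a * b + b ^ 2) by ring, abs_mul]
    have habq : a * b ≤ 1 + R ^ 2 := by nlinarith
    have : |a ^ 2 + a * b + b ^ 2| ≤ 3 * (1 + R ^ 2) := by
      rw [abs_of_nonneg (by positivity)]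
      linarith
    calc |a - b| * |a ^ 2 + a * b + b ^ 2| ≤ |a - b| * (3 * (1 + R ^ 2)) :=
          mul_le_mul_of_nonneg_left this (abs_nonneg _)
      _ = 3 * (1 + R ^ 2) * |a - b| := by ring
  calc |a ^ 3 - b ^ 3| ≤ 3 * (1 + R ^ 2) * |a - b| := hcube
    _ ≤ 3 * (1 + R ^ 2) * (R * |v - w|) := by
        exact mul_le_mul_of_nonneg_left hab (by positivity)
    _ = 3 * R * (1 + R ^ 2) * |v - w| := by ring

lemma bound32 {R v : ℝ} (hv : |v| ≤ R) :
    (1 + v ^ 2) ^ ((3:ℝ)/2) ≤ (1 + R ^ 2) ^ 2 := by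
  have hv2 : (0:ℝ) ≤ 1 + v ^ 2 := by positivity
  have h1 : (1 + v ^ 2) ^ ((3:ℝ)/2) ≤ (1 + v ^ 2) ^ ((2:ℝ)) := by
    apply Real.rpow_le_rpow_of_exponent_le (by nlinarith [sq_nonneg v]) (by norm_num)
  have h2 : (1 + v ^ 2) ^ ((2:ℝ)) = (1 + v ^ 2) ^ (2:ℕ) := by
    rw [← Real.rpow_natCast (1 + v ^ 2) 2]; norm_num
  have hvR : v ^ 2 ≤ R ^ 2 := by nlinarith [sq_abs v, abs_nonneg v]
  have h3 : (1 + v ^ 2) ^ (2:ℕ) ≤ (1 + R ^ 2) ^ (2:ℕ) := by nlinarith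
  calc (1 + v ^ 2) ^ ((3:ℝ)/2) ≤ (1 + v ^ 2) ^ ((2:ℝ)) := h1
    _ = (1 + v ^ 2) ^ (2:ℕ) := h2
    _ ≤ (1 + R ^ 2) ^ (2:ℕ) := h3
    _ = (1 + R ^ 2) ^ 2 := rfl

lemma pos32 (v : ℝ) : 0 < (1 + v ^ 2) ^ ((3:ℝ)/2) :=
  Real.rpow_pos_of_pos (by positivity) _

lemma one_le_32 (v : ℝ) : 1 ≤ (1 + v ^ 2) ^ ((3:ℝ)/2) :=
  Real.one_le_rpow (by nlinarith [sq_nonneg v]) (by norm_num)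

end Stmt0Aux
namespace Stmt0Aux

noncomputable def Fq (n : ℕ) (Ht : ℝ → ℝ) (q : ℝ → ℝ) (η : ℝ) : ℝ :=
  (-((n:ℝ) - 2) * q η ^ 3 + ((n:ℝ) - 1) * Ht η * η * (1 + q η ^ 2) ^ ((3:ℝ)/2)) * η ^ (n - 3)

lemma Fq_aemeasurable (n : ℕ) {Ht q : ℝ → ℝ} {s : Set ℝ} (hs : MeasurableSet s)
    (hq : ContinuousOn q s) (hHt : AEMeasurable Ht (volume.restrict s)) :
    AEMeasurable (Fq n Ht q) (volume.restrict s) := by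
  have hq' : AEMeasurable q (volume.restrict s) := hq.aemeasurable hs
  have hA : AEMeasurable (fun η => -((n:ℝ)-2) * q η ^ 3 * η ^ (n-3)) (volume.restrict s) :=
    ((hq'.pow_const 3).const_mul _).mul ((measurable_id.pow_const _).aemeasurable)
  have hP : AEMeasurable (fun η => (1 + q η ^ 2) ^ ((3:ℝ)/2)) (volume.restrict s) := by
    have hc : Continuous (fun v : ℝ => Real.sqrt (1 + v ^ 2) ^ 3) := by continuity
    have h2 : AEMeasurable (fun η => Real.sqrt (1 + q η ^ 2) ^ 3) (volume.restrict s) :=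
      hc.measurable.comp_aemeasurable hq'
    have heq : (fun η => Real.sqrt (1 + q η ^ 2) ^ 3) =
        (fun η => (1 + q η ^ 2) ^ ((3:ℝ)/2)) := by
      funext η; rw [rpow32 _ (by positivity)]
    exact heq ▸ h2
  have hB : AEMeasurable
      (fun η => ((n:ℝ)-1) * Ht η * η * ((1 + q η ^ 2) ^ ((3:ℝ)/2)) * η ^ (n-3))
      (volume.restrict s) :=
    (((hHt.const_mul _).mul aemeasurable_id).mul hP).mul
      ((measurable_id.pow_const _).aemeasurable)
  have heq : (fun η => -((n:ℝ)-2) * q η ^ 3 * η ^ (n-3)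
      + ((n:ℝ)-1) * Ht η * η * ((1 + q η ^ 2) ^ ((3:ℝ)/2)) * η ^ (n-3)) = Fq n Ht q := by
    funext η; unfold Fq; ring
  exact heq ▸ (hA.add hB)

end Stmt0Aux
namespace Stmt0Aux

lemma pow_mul_pow_sub3 {η : ℝ} (n : ℕ) (hn : 3 ≤ n) :
    η ^ 3 * η ^ (n - 3) = η ^ n := by
  rw [← pow_add]; congr 1; omega

lemma pow_mul_pow_sub1 {η : ℝ} (n : ℕ) (hn : 3 ≤ n) :
    η * η ^ (n - 3) = η ^ (n - 2) := by
  rw [← pow_succ']; congr 1; omega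

lemma Fq_abs_le (n : ℕ) (hn : 3 ≤ n) {Ht q : ℝ → ℝ} {C M Y₁ η : ℝ}
    (hC : 0 ≤ C) (hM : 0 ≤ M) (hY₁ : 0 < Y₁) (hη : η ∈ Set.Ioc (0:ℝ) Y₁)
    (hHtb : |Ht η| ≤ C) (hqb : |q η| ≤ M * η) :
    |Fq n Ht q η| ≤ ((n:ℝ) * M ^ 3) * η ^ n
      + ((n:ℝ) * C * (1 + (M * Y₁) ^ 2) ^ 2) * η ^ (n - 2) := by
  obtain ⟨hη0, hη1⟩ := hη
  have hη0' : (0:ℝ) ≤ η := le_of_lt hη0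
  have hn2 : (0:ℝ) ≤ (n:ℝ) - 2 := by
    have : (3:ℝ) ≤ (n:ℝ) := by exact_mod_cast hn
    linarith
  have hn1 : (0:ℝ) ≤ (n:ℝ) - 1 := by linarith
  have hqR : |q η| ≤ M * Y₁ := hqb.trans (by nlinarith)
  have h32 : (1 + q η ^ 2) ^ ((3:ℝ)/2) ≤ (1 + (M * Y₁) ^ 2) ^ 2 := bound32 hqR
  have h32' : (0:ℝ) < (1 + q η ^ 2) ^ ((3:ℝ)/2) := pos32 _
  have hcube : |q η ^ 3| ≤ M ^ 3 * η ^ 3 := by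
    rw [abs_pow]
    calc |q η| ^ 3 ≤ (M * η) ^ 3 := by
          exact pow_le_pow_left₀ (abs_nonneg _) hqb 3
      _ = M ^ 3 * η ^ 3 := by ring
  have hG : |(-((n:ℝ) - 2) * q η ^ 3 + ((n:ℝ) - 1) * Ht η * η * (1 + q η ^ 2) ^ ((3:ℝ)/2))|
      ≤ (n:ℝ) * M ^ 3 * η ^ 3 + (n:ℝ) * C * (1 + (M * Y₁) ^ 2) ^ 2 * η := by
    refine (abs_add_le _ _).trans ?_
    have e1 : |(-((n:ℝ) - 2) * q η ^ 3)| ≤ ((n:ℝ) - 2) * (M ^ 3 * η ^ 3) := by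
      rw [abs_mul, abs_neg, abs_of_nonneg hn2]
      exact mul_le_mul_of_nonneg_left hcube hn2
    have e2 : |((n:ℝ) - 1) * Ht η * η * (1 + q η ^ 2) ^ ((3:ℝ)/2)|
        ≤ ((n:ℝ) - 1) * C * η * ((1 + (M * Y₁) ^ 2) ^ 2) := by
      rw [abs_mul, abs_mul, abs_mul, abs_of_nonneg hn1, abs_of_nonneg hη0',
        abs_of_nonneg (le_of_lt h32')]
      have hb : (0:ℝ) ≤ (1 + (M*Y₁)^2)^2 := by positivity
      apply mul_le_mul
      · apply mul_le_mul
        · exact mul_le_mul_of_nonneg_left hHtb hn1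
        · exact le_rfl
        · exact hη0'
        · positivity
      · exact h32
      · exact le_of_lt h32'
      · positivity
    have hnn : ((n:ℝ) - 2) * (M ^ 3 * η ^ 3) ≤ (n:ℝ) * M ^ 3 * η ^ 3 := by
      have ht : (0:ℝ) ≤ M ^ 3 * η ^ 3 := by positivity
      nlinarith
    have hnn2 : ((n:ℝ) - 1) * C * η * ((1 + (M * Y₁) ^ 2) ^ 2)
        ≤ (n:ℝ) * C * (1 + (M * Y₁) ^ 2) ^ 2 * η := by
      have ht : (0:ℝ) ≤ C * η * (1 + (M * Y₁) ^ 2) ^ 2 := by positivity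
      nlinarith
    linarith
  unfold Fq
  rw [abs_mul, abs_pow, abs_of_nonneg hη0']
  calc _ ≤ ((n:ℝ) * M ^ 3 * η ^ 3 + (n:ℝ) * C * (1 + (M * Y₁) ^ 2) ^ 2 * η) * η ^ (n-3) :=
        mul_le_mul_of_nonneg_right hG (by positivity)
    _ = ((n:ℝ) * M ^ 3) * (η ^ 3 * η ^ (n-3))
        + ((n:ℝ) * C * (1 + (M * Y₁) ^ 2) ^ 2) * (η * η ^ (n-3)) := by ring
    _ = _ := by rw [pow_mul_pow_sub3 n hn, pow_mul_pow_sub1 n hn]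

lemma Fq_integrableOn (n : ℕ) (hn : 3 ≤ n) {Ht q : ℝ → ℝ} {C M Y₁ : ℝ}
    (hC : 0 ≤ C) (hM : 0 ≤ M) (hY₁ : 0 < Y₁)
    (hHtb : ∀ y ∈ Set.Ioc (0:ℝ) Y₁, |Ht y| ≤ C)
    (hmeas : AEMeasurable Ht (volume.restrict (Set.Ioc 0 Y₁)))
    (hq : ContinuousOn q (Set.Ioc 0 Y₁))
    (hqb : ∀ η ∈ Set.Ioc (0:ℝ) Y₁, |q η| ≤ M * η) :
    IntegrableOn (Fq n Ht q) (Set.Ioc 0 Y₁) volume := by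
  have hmeas' := Fq_aemeasurable n measurableSet_Ioc hq hmeas
  refine ⟨hmeas'.aestronglyMeasurable, ?_⟩
  apply MeasureTheory.HasFiniteIntegral.restrict_of_bounded
    (C := ((n:ℝ) * M ^ 3) * Y₁ ^ n + ((n:ℝ) * C * (1 + (M * Y₁) ^ 2) ^ 2) * Y₁ ^ (n - 2))
    measure_Ioc_lt_top
  refine (ae_restrict_iff' measurableSet_Ioc).2 (Filter.Eventually.of_forall fun η hη => ?_)
  rw [Real.norm_eq_abs]
  refine (Fq_abs_le n hn hC hM hY₁ hη (hHtb η hη) (hqb η hη)).trans ?_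
  have h1 : η ^ n ≤ Y₁ ^ n := pow_le_pow_left₀ (le_of_lt hη.1) hη.2 n
  have h2 : η ^ (n-2) ≤ Y₁ ^ (n-2) := pow_le_pow_left₀ (le_of_lt hη.1) hη.2 _
  have c1 : (0:ℝ) ≤ (n:ℝ) * M ^ 3 := by positivity
  have c2 : (0:ℝ) ≤ (n:ℝ) * C * (1 + (M * Y₁) ^ 2) ^ 2 := by positivity
  nlinarith

end Stmt0Aux
namespace Stmt0Aux

lemma est (k₁ k₂ : ℕ) (c₁ c₂ : ℝ) (hc₁ : 0 ≤ c₁) (hc₂ : 0 ≤ c₂) {y : ℝ} (hy : 0 < y)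
    {g : ℝ → ℝ} (hint : IntervalIntegrable g volume 0 y)
    (hb : ∀ η ∈ Set.Ioc (0:ℝ) y, |g η| ≤ c₁ * η ^ k₁ + c₂ * η ^ k₂) :
    |∫ η in (0:ℝ)..y, g η| ≤ c₁ * y ^ (k₁+1) / (k₁+1) + c₂ * y ^ (k₂+1) / (k₂+1) := by
  have hbc : Continuous (fun η : ℝ => c₁ * η ^ k₁ + c₂ * η ^ k₂) := by continuity
  have hbi : IntervalIntegrable (fun η : ℝ => c₁ * η ^ k₁ + c₂ * η ^ k₂) volume 0 y :=
    hbc.intervalIntegrable _ _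
  have hae : ∀ᵐ t ∂(volume.restrict (Set.uIoc (0:ℝ) y)), ‖g t‖ ≤ c₁ * t ^ k₁ + c₂ * t ^ k₂ := by
    rw [Set.uIoc_of_le (le_of_lt hy)]
    exact (ae_restrict_iff' measurableSet_Ioc).2
      (Filter.Eventually.of_forall fun η hη => by rw [Real.norm_eq_abs]; exact hb η hη)
  have h1 := intervalIntegral.norm_integral_le_abs_of_norm_le hae hbi
  rw [Real.norm_eq_abs] at h1
  have h2 : (∫ η in (0:ℝ)..y, (c₁ * η ^ k₁ + c₂ * η ^ k₂))
      = c₁ * y ^ (k₁+1) / (k₁+1) + c₂ * y ^ (k₂+1) / (k₂+1) := by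
    rw [intervalIntegral.integral_add
        ((intervalIntegral.intervalIntegrable_pow k₁).const_mul c₁)
        ((intervalIntegral.intervalIntegrable_pow k₂).const_mul c₂),
      intervalIntegral.integral_const_mul, intervalIntegral.integral_const_mul,
      integral_pow, integral_pow]
    simp [zero_pow]
    ring
  rw [h2] at h1
  refine h1.trans ?_
  rw [abs_of_nonneg (by positivity)]

end Stmt0Aux
namespace Stmt0Aux

lemma cube_lip {R v w : ℝ} (hR : 0 ≤ R) (hv : |v| ≤ R) (hw : |w| ≤ R) :
    |v ^ 3 - w ^ 3| ≤ 3 * R ^ 2 * |v - w| := by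
  rw [show v ^ 3 - w ^ 3 = (v - w) * (v ^ 2 + v * w + w ^ 2) by ring, abs_mul, mul_comm]
  refine mul_le_mul_of_nonneg_right ?_ (abs_nonneg _)
  have h1 : |v ^ 2 + v * w + w ^ 2| ≤ |v| ^ 2 + |v| * |w| + |w| ^ 2 := by
    refine (abs_add_le _ _).trans ?_
    have := (abs_add_le (v ^ 2) (v * w))
    have hvw : |v * w| = |v| * |w| := abs_mul v w
    have h2 : |v ^ 2| = |v| ^ 2 := by rw [abs_pow]
    have h3 : |w ^ 2| = |w| ^ 2 := by rw [abs_pow]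
    nlinarith [abs_nonneg (v^2 + v*w)]
  refine h1.trans ?_
  nlinarith [abs_nonneg v, abs_nonneg w]

lemma pow_mul_pow_sub2 {η : ℝ} (n : ℕ) (hn : 3 ≤ n) :
    η ^ 2 * η ^ (n - 3) = η ^ (n - 1) := by
  rw [← pow_add]; congr 1; omega

lemma Fq_diff_le (n : ℕ) (hn : 3 ≤ n) {Ht q₁ q₂ : ℝ → ℝ} {C R Y₁ η d : ℝ}
    (hC : 0 ≤ C) (hR : 0 ≤ R) (hd : 0 ≤ d) (hη : η ∈ Set.Ioc (0:ℝ) Y₁)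
    (hHtb : |Ht η| ≤ C) (h1 : |q₁ η| ≤ R) (h2 : |q₂ η| ≤ R)
    (hdiff : |q₁ η - q₂ η| ≤ d * η) :
    |Fq n Ht q₁ η - Fq n Ht q₂ η|
      ≤ (3 * (n:ℝ) * R ^ 2 * d) * η ^ (n - 2)
        + (3 * (n:ℝ) * C * R * (1 + R ^ 2) * d) * η ^ (n - 1) := by
  obtain ⟨hη0, _⟩ := hη
  have hη0' : (0:ℝ) ≤ η := le_of_lt hη0
  have hn2 : (0:ℝ) ≤ (n:ℝ) - 2 := by
    have : (3:ℝ) ≤ (n:ℝ) := by exact_mod_cast hn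
    linarith
  have hn1 : (0:ℝ) ≤ (n:ℝ) - 1 := by linarith
  set v := q₁ η
  set w := q₂ η
  have hcube : |v ^ 3 - w ^ 3| ≤ 3 * R ^ 2 * (d * η) :=
    (cube_lip hR h1 h2).trans (mul_le_mul_of_nonneg_left hdiff (by positivity))
  have h32 : |(1 + v ^ 2) ^ ((3:ℝ)/2) - (1 + w ^ 2) ^ ((3:ℝ)/2)| ≤ 3 * R * (1 + R ^ 2) * (d * η) :=
    (lip32 hR h1 h2).trans (mul_le_mul_of_nonneg_left hdiff (by positivity))
  have key : Fq n Ht q₁ η - Fq n Ht q₂ η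
      = (-((n:ℝ) - 2) * (v ^ 3 - w ^ 3)
        + ((n:ℝ) - 1) * Ht η * η * ((1 + v ^ 2) ^ ((3:ℝ)/2) - (1 + w ^ 2) ^ ((3:ℝ)/2)))
          * η ^ (n - 3) := by
    unfold Fq; ring
  rw [key, abs_mul, abs_pow, abs_of_nonneg hη0']
  have hGd : |(-((n:ℝ) - 2) * (v ^ 3 - w ^ 3)
      + ((n:ℝ) - 1) * Ht η * η * ((1 + v ^ 2) ^ ((3:ℝ)/2) - (1 + w ^ 2) ^ ((3:ℝ)/2)))|
      ≤ (3 * (n:ℝ) * R ^ 2 * d) * η + (3 * (n:ℝ) * C * R * (1 + R ^ 2) * d) * η ^ 2 := by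
    refine (abs_add_le _ _).trans ?_
    have e1 : |(-((n:ℝ) - 2) * (v ^ 3 - w ^ 3))| ≤ ((n:ℝ) - 2) * (3 * R ^ 2 * (d * η)) := by
      rw [abs_mul, abs_neg, abs_of_nonneg hn2]
      exact mul_le_mul_of_nonneg_left hcube hn2
    have e2 : |((n:ℝ) - 1) * Ht η * η * ((1 + v ^ 2) ^ ((3:ℝ)/2) - (1 + w ^ 2) ^ ((3:ℝ)/2))|
        ≤ ((n:ℝ) - 1) * C * η * (3 * R * (1 + R ^ 2) * (d * η)) := by
      rw [abs_mul, abs_mul, abs_mul, abs_of_nonneg hn1, abs_of_nonneg hη0']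
      have hCη : ((n:ℝ) - 1) * |Ht η| * η ≤ ((n:ℝ) - 1) * C * η := by
        have := mul_le_mul_of_nonneg_left hHtb hn1
        nlinarith
      refine mul_le_mul hCη h32 (abs_nonneg _) (by positivity)
    have t1 : ((n:ℝ) - 2) * (3 * R ^ 2 * (d * η)) ≤ (3 * (n:ℝ) * R ^ 2 * d) * η := by
      have ht : (0:ℝ) ≤ R ^ 2 * (d * η) := by positivity
      nlinarith
    have t2 : ((n:ℝ) - 1) * C * η * (3 * R * (1 + R ^ 2) * (d * η))
        ≤ (3 * (n:ℝ) * C * R * (1 + R ^ 2) * d) * η ^ 2 := by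
      have ht : (0:ℝ) ≤ C * R * (1 + R ^ 2) * d * η ^ 2 := by positivity
      nlinarith
    linarith
  calc _ ≤ ((3 * (n:ℝ) * R ^ 2 * d) * η + (3 * (n:ℝ) * C * R * (1 + R ^ 2) * d) * η ^ 2)
        * η ^ (n - 3) := mul_le_mul_of_nonneg_right hGd (by positivity)
    _ = (3 * (n:ℝ) * R ^ 2 * d) * (η * η ^ (n - 3))
        + (3 * (n:ℝ) * C * R * (1 + R ^ 2) * d) * (η ^ 2 * η ^ (n - 3)) := by ring
    _ = _ := by rw [pow_mul_pow_sub1 n hn, pow_mul_pow_sub2 n hn]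

end Stmt0Aux
namespace Stmt0Aux

lemma zpow_mul_pow {y : ℝ} (hy : y ≠ 0) (a : ℤ) (k : ℕ) :
    y ^ a * y ^ k = y ^ (a + k) := by
  rw [← zpow_natCast y k, ← zpow_add₀ hy]

lemma hz1 {y : ℝ} (n : ℕ) (hn : 3 ≤ n) (hy : y ≠ 0) :
    y ^ ((1:ℤ) - n) * y ^ (n + 1) = y ^ 2 := by
  rw [zpow_mul_pow hy, show (1:ℤ) - n + (n + 1 : ℕ) = ((2:ℕ):ℤ) by omega, zpow_natCast]

lemma hz2 {y : ℝ} (n : ℕ) (hn : 3 ≤ n) (hy : y ≠ 0) :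
    y ^ ((1:ℤ) - n) * y ^ ((n - 2) + 1) = 1 := by
  rw [zpow_mul_pow hy, show (1:ℤ) - n + ((n - 2) + 1 : ℕ) = 0 by omega, zpow_zero]

lemma hz3 {y : ℝ} (n : ℕ) (hn : 3 ≤ n) (hy : y ≠ 0) :
    y ^ ((1:ℤ) - n) * y ^ ((n - 1) + 1) = y := by
  rw [zpow_mul_pow hy, show (1:ℤ) - n + ((n - 1) + 1 : ℕ) = 1 by omega, zpow_one]

lemma hz4 {y : ℝ} (n : ℕ) (hy : y ≠ 0) :
    y * y ^ ((1:ℤ) - n) = y ^ ((2:ℤ) - n) := by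
  rw [show y * y ^ ((1:ℤ) - n) = y ^ (1:ℤ) * y ^ ((1:ℤ) - n) by rw [zpow_one],
    ← zpow_add₀ hy, show (1:ℤ) + (1 - n) = 2 - n by ring]

lemma hz5 {y : ℝ} (n : ℕ) (hn : 3 ≤ n) (hy : y ≠ 0) :
    y ^ ((n - 2 : ℕ)) * y ^ ((2:ℤ) - n) = 1 := by
  rw [mul_comm, zpow_mul_pow hy, show (2:ℤ) - n + (n - 2 : ℕ) = 0 by omega, zpow_zero]

end Stmt0Aux
namespace Stmt0Aux

noncomputable def qfD (Y₁ : ℝ) (r : BoundedContinuousFunction (Set.Ioc (0:ℝ) Y₁) ℝ)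
    (η : ℝ) : ℝ :=
  if h : η ∈ Set.Ioc (0:ℝ) Y₁ then η * r ⟨η, h⟩ else 0

lemma qfD_continuousOn (Y₁ : ℝ) (r : BoundedContinuousFunction (Set.Ioc (0:ℝ) Y₁) ℝ) :
    ContinuousOn (qfD Y₁ r) (Set.Ioc 0 Y₁) := by
  rw [continuousOn_iff_continuous_restrict]
  have heq : (Set.Ioc (0:ℝ) Y₁).domRestrict (qfD Y₁ r) = fun x : (Set.Ioc (0:ℝ) Y₁) => (x : ℝ) * r x := by
    funext x
    simp only [Set.domRestrict_apply, qfD, x.2, dif_pos]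
  rw [heq]
  exact continuous_subtype_val.mul r.continuous

lemma qfD_abs_le (Y₁ : ℝ) (r : BoundedContinuousFunction (Set.Ioc (0:ℝ) Y₁) ℝ)
    {η : ℝ} (hη : η ∈ Set.Ioc (0:ℝ) Y₁) : |qfD Y₁ r η| ≤ ‖r‖ * η := by
  simp only [qfD, hη, dif_pos, abs_mul, abs_of_nonneg (le_of_lt hη.1)]
  rw [mul_comm (‖r‖) η]
  exact mul_le_mul_of_nonneg_left
    (by simpa [Real.norm_eq_abs] using r.norm_coe_le_norm ⟨η, hη⟩) (le_of_lt hη.1)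

lemma qfD_apply (Y₁ : ℝ) (r : BoundedContinuousFunction (Set.Ioc (0:ℝ) Y₁) ℝ)
    {η : ℝ} (hη : η ∈ Set.Ioc (0:ℝ) Y₁) : qfD Y₁ r η = η * r ⟨η, hη⟩ := by
  simp only [qfD, hη, dif_pos]

noncomputable def PhiVal (n : ℕ) (Ht : ℝ → ℝ) (Y₁ : ℝ)
    (r : BoundedContinuousFunction (Set.Ioc (0:ℝ) Y₁) ℝ) (y : ℝ) : ℝ :=
  y ^ ((1:ℤ) - n) * ∫ η in (0:ℝ)..y, Fq n Ht (qfD Y₁ r) η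

end Stmt0Aux
namespace Stmt0Aux

lemma qfD_int (n : ℕ) (hn : 3 ≤ n) (Ht : ℝ → ℝ) {C M Y₁ : ℝ}
    (hC : 0 ≤ C) (hM : 0 ≤ M) (hY₁ : 0 < Y₁)
    (hHtb : ∀ y ∈ Set.Ioc (0:ℝ) Y₁, |Ht y| ≤ C)
    (hmeas : AEMeasurable Ht (volume.restrict (Set.Ioc 0 Y₁)))
    (r : BoundedContinuousFunction (Set.Ioc (0:ℝ) Y₁) ℝ) (hr : ‖r‖ ≤ M) :
    IntegrableOn (Fq n Ht (qfD Y₁ r)) (Set.Ioc 0 Y₁) volume :=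
  Fq_integrableOn n hn hC hM hY₁ hHtb hmeas (qfD_continuousOn _ _)
    (fun η hη => (qfD_abs_le _ _ hη).trans
      (mul_le_mul_of_nonneg_right hr (le_of_lt hη.1)))

lemma qfD_ii (n : ℕ) (hn : 3 ≤ n) (Ht : ℝ → ℝ) {C M Y₁ y : ℝ}
    (hC : 0 ≤ C) (hM : 0 ≤ M) (hY₁ : 0 < Y₁)
    (hHtb : ∀ y ∈ Set.Ioc (0:ℝ) Y₁, |Ht y| ≤ C)
    (hmeas : AEMeasurable Ht (volume.restrict (Set.Ioc 0 Y₁)))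
    (r : BoundedContinuousFunction (Set.Ioc (0:ℝ) Y₁) ℝ) (hr : ‖r‖ ≤ M)
    (hy : y ∈ Set.Ioc (0:ℝ) Y₁) :
    IntervalIntegrable (Fq n Ht (qfD Y₁ r)) volume 0 y :=
  (intervalIntegrable_iff_integrableOn_Ioc_of_le (le_of_lt hy.1)).2
    ((qfD_int n hn Ht hC hM hY₁ hHtb hmeas r hr).mono_set
      (Set.Ioc_subset_Ioc_right hy.2))

lemma PhiVal_continuousOn (n : ℕ) (Ht : ℝ → ℝ) {Y₁ : ℝ}
    (r : BoundedContinuousFunction (Set.Ioc (0:ℝ) Y₁) ℝ)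
    (hI : IntegrableOn (Fq n Ht (qfD Y₁ r)) (Set.Ioc 0 Y₁) volume) :
    ContinuousOn (PhiVal n Ht Y₁ r) (Set.Ioc 0 Y₁) := by
  have hIcc : IntegrableOn (Fq n Ht (qfD Y₁ r)) (Set.Icc 0 Y₁) volume :=
    (integrableOn_Icc_iff_integrableOn_Ioc).2 hI
  have hprim := intervalIntegral.continuousOn_primitive (μ := volume) hIcc
  have hprim' : ContinuousOn (fun x => ∫ η in (0:ℝ)..x, Fq n Ht (qfD Y₁ r) η)
      (Set.Ioc 0 Y₁) := by
    refine ContinuousOn.congr (hprim.mono Set.Ioc_subset_Icc_self) ?_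
    intro x hx
    simp only
    rw [intervalIntegral.integral_of_le (le_of_lt hx.1)]
  have hzp : ContinuousOn (fun y : ℝ => y ^ ((1:ℤ) - n)) (Set.Ioc 0 Y₁) := fun y hy =>
    (continuousAt_zpow₀ y _ (Or.inl (ne_of_gt hy.1))).continuousWithinAt
  exact hzp.mul hprim'

end Stmt0Aux
namespace Stmt0Aux

lemma est' (k₁ k₂ : ℕ) (c₁ c₂ e₁ e₂ : ℝ) (hc₁ : 0 ≤ c₁) (hc₂ : 0 ≤ c₂)
    (hd₁ : c₁ / (k₁+1) ≤ e₁) (hd₂ : c₂ / (k₂+1) ≤ e₂) {y : ℝ} (hy : 0 < y)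
    {g : ℝ → ℝ} (hint : IntervalIntegrable g volume 0 y)
    (hb : ∀ η ∈ Set.Ioc (0:ℝ) y, |g η| ≤ c₁ * η ^ k₁ + c₂ * η ^ k₂) :
    |∫ η in (0:ℝ)..y, g η| ≤ e₁ * y ^ (k₁+1) + e₂ * y ^ (k₂+1) := by
  refine (est k₁ k₂ c₁ c₂ hc₁ hc₂ hy hint hb).trans ?_
  have h1 : c₁ * y ^ (k₁+1) / (k₁+1) = (c₁ / (k₁+1)) * y ^ (k₁+1) := by ring
  have h2 : c₂ * y ^ (k₂+1) / (k₂+1) = (c₂ / (k₂+1)) * y ^ (k₂+1) := by ring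
  rw [h1, h2]
  have p1 : (0:ℝ) ≤ y ^ (k₁+1) := by positivity
  have p2 : (0:ℝ) ≤ y ^ (k₂+1) := by positivity
  exact add_le_add (mul_le_mul_of_nonneg_right hd₁ p1) (mul_le_mul_of_nonneg_right hd₂ p2)

lemma PhiVal_bound (n : ℕ) (hn : 3 ≤ n) (Ht : ℝ → ℝ) {C M Y₁ : ℝ}
    (hC : 0 ≤ C) (hM : 2 * C + 1 ≤ M) (hY₁ : 0 < Y₁)
    (hHtb : ∀ y ∈ Set.Ioc (0:ℝ) Y₁, |Ht y| ≤ C)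
    (hmeas : AEMeasurable Ht (volume.restrict (Set.Ioc 0 Y₁)))
    (hs1 : M * Y₁ ≤ 1/4)
    (r : BoundedContinuousFunction (Set.Ioc (0:ℝ) Y₁) ℝ) (hr : ‖r‖ ≤ M) :
    ∀ y ∈ Set.Ioc (0:ℝ) Y₁, |PhiVal n Ht Y₁ r y| ≤ M := by
  have hM0 : (0:ℝ) < M := by linarith
  intro y hy
  obtain ⟨hy0, hy1⟩ := hy
  set K := (1 + (M * Y₁) ^ 2) ^ 2 with hK
  have hK0 : (0:ℝ) ≤ K := by positivity
  have hII := qfD_ii n hn Ht hC hM0.le hY₁ hHtb hmeas r hr ⟨hy0, hy1⟩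
  have hn3 : (3:ℝ) ≤ (n:ℝ) := by exact_mod_cast hn
  have hb : ∀ η ∈ Set.Ioc (0:ℝ) y,
      |Fq n Ht (qfD Y₁ r) η| ≤ ((n:ℝ) * M ^ 3) * η ^ n + ((n:ℝ) * C * K) * η ^ (n-2) := by
    intro η hη
    have hη' : η ∈ Set.Ioc (0:ℝ) Y₁ := ⟨hη.1, hη.2.trans hy1⟩
    exact Fq_abs_le n hn hC hM0.le hY₁ hη' (hHtb η hη')
      ((qfD_abs_le _ _ hη').trans (mul_le_mul_of_nonneg_right hr (le_of_lt hη'.1)))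
  have hcast : ((n - 2 : ℕ) : ℝ) = (n:ℝ) - 2 := by
    rw [Nat.cast_sub (by omega)]; norm_num
  have d1 : ((n:ℝ) * M ^ 3) / ((n:ℕ) + 1) ≤ M ^ 3 := by
    rw [div_le_iff₀ (by positivity)]
    have : (0:ℝ) ≤ M ^ 3 := by positivity
    nlinarith
  have d2 : ((n:ℝ) * C * K) / (((n - 2 : ℕ):ℝ) + 1) ≤ (3/2) * (C * K) := by
    rw [hcast, div_le_iff₀ (by linarith)]
    have hCK : (0:ℝ) ≤ C * K := by positivity
    nlinarith
  have hest := est' n (n-2) _ _ (M ^ 3) ((3/2) * (C * K))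
    (by positivity) (by positivity) d1 d2 hy0 hII hb
  have hzp : (0:ℝ) < y ^ ((1:ℤ) - n) := zpow_pos hy0 _
  have habs : |PhiVal n Ht Y₁ r y|
      = y ^ ((1:ℤ) - n) * |∫ η in (0:ℝ)..y, Fq n Ht (qfD Y₁ r) η| := by
    rw [PhiVal, abs_mul, abs_of_nonneg hzp.le]
  rw [habs]
  calc y ^ ((1:ℤ) - n) * |∫ η in (0:ℝ)..y, Fq n Ht (qfD Y₁ r) η|
      ≤ y ^ ((1:ℤ) - n) * (M ^ 3 * y ^ (n+1) + (3/2) * (C * K) * y ^ ((n-2)+1)) :=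
        mul_le_mul_of_nonneg_left hest hzp.le
    _ = M ^ 3 * (y ^ ((1:ℤ) - n) * y ^ (n+1))
        + (3/2) * (C * K) * (y ^ ((1:ℤ) - n) * y ^ ((n-2)+1)) := by ring
    _ = M ^ 3 * y ^ 2 + (3/2) * (C * K) := by
        rw [hz1 n hn hy0.ne', hz2 n hn hy0.ne']; ring
    _ ≤ M := by
        have hyY : y ^ 2 ≤ Y₁ ^ 2 := by nlinarith
        have hMY : (M * Y₁) ^ 2 ≤ 1/16 := by nlinarith [mul_pos hM0 hY₁]
        have hKb : K ≤ 289/256 := by rw [hK]; nlinarith [sq_nonneg (M * Y₁)]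
        have h1 : M ^ 3 * y ^ 2 ≤ M / 16 := by
          have e : M ^ 3 * Y₁ ^ 2 = M * (M * Y₁) ^ 2 := by ring
          have : M ^ 3 * y ^ 2 ≤ M ^ 3 * Y₁ ^ 2 :=
            mul_le_mul_of_nonneg_left hyY (by positivity)
          rw [e] at this
          nlinarith
        have h2 : (3/2) * (C * K) ≤ (867/512) * C := by nlinarith
        nlinarith

end Stmt0Aux
namespace Stmt0Aux

lemma PhiVal_contract (n : ℕ) (hn : 3 ≤ n) (Ht : ℝ → ℝ) {C M Y₁ : ℝ}
    (hC : 0 ≤ C) (hM : 2 * C + 1 ≤ M) (hY₁ : 0 < Y₁)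
    (hHtb : ∀ y ∈ Set.Ioc (0:ℝ) Y₁, |Ht y| ≤ C)
    (hmeas : AEMeasurable Ht (volume.restrict (Set.Ioc 0 Y₁)))
    (hs1 : M * Y₁ ≤ 1/4) (hs2 : Y₁ ≤ 1/(100*(C+1)))
    (r s : BoundedContinuousFunction (Set.Ioc (0:ℝ) Y₁) ℝ)
    (hr : ‖r‖ ≤ M) (hs : ‖s‖ ≤ M) :
    ∀ y ∈ Set.Ioc (0:ℝ) Y₁,
      |PhiVal n Ht Y₁ r y - PhiVal n Ht Y₁ s y| ≤ (1/2) * dist r s := by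
  have hM0 : (0:ℝ) < M := by linarith
  set R := M * Y₁ with hR
  have hR0 : (0:ℝ) ≤ R := by positivity
  set d := dist r s with hd
  have hd0 : (0:ℝ) ≤ d := dist_nonneg
  have hn3 : (3:ℝ) ≤ (n:ℝ) := by exact_mod_cast hn
  intro y hy
  obtain ⟨hy0, hy1⟩ := hy
  have hIIr := qfD_ii n hn Ht hC hM0.le hY₁ hHtb hmeas r hr ⟨hy0, hy1⟩
  have hIIs := qfD_ii n hn Ht hC hM0.le hY₁ hHtb hmeas s hs ⟨hy0, hy1⟩
  -- pointwise difference bound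
  have hb : ∀ η ∈ Set.Ioc (0:ℝ) y,
      |Fq n Ht (qfD Y₁ r) η - Fq n Ht (qfD Y₁ s) η|
        ≤ (3 * (n:ℝ) * R ^ 2 * d) * η ^ (n - 2)
          + (3 * (n:ℝ) * C * R * (1 + R ^ 2) * d) * η ^ (n - 1) := by
    intro η hη
    have hη' : η ∈ Set.Ioc (0:ℝ) Y₁ := ⟨hη.1, hη.2.trans hy1⟩
    have h1 : |qfD Y₁ r η| ≤ R := by
      refine (qfD_abs_le _ _ hη').trans ?_
      rw [hR]
      have := hη'.2
      nlinarith [hη'.1.le, le_trans (abs_nonneg _) ((qfD_abs_le Y₁ r hη'))]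
    have h2 : |qfD Y₁ s η| ≤ R := by
      refine (qfD_abs_le _ _ hη').trans ?_
      rw [hR]
      nlinarith [hη'.1.le, hη'.2, le_trans (abs_nonneg _) ((qfD_abs_le Y₁ s hη'))]
    have hdiff : |qfD Y₁ r η - qfD Y₁ s η| ≤ d * η := by
      rw [qfD_apply Y₁ r hη', qfD_apply Y₁ s hη', ← mul_sub, abs_mul,
        abs_of_nonneg (le_of_lt hη'.1), mul_comm]
      refine mul_le_mul_of_nonneg_right ?_ (le_of_lt hη'.1)
      have := BoundedContinuousFunction.dist_coe_le_dist (f := r) (g := s) (⟨η, hη'⟩)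
      rwa [Real.dist_eq] at this
    exact Fq_diff_le n hn hC hR0 hd0 hη' (hHtb η hη') h1 h2 hdiff
  -- integral of the difference
  have hsub : IntervalIntegrable
      (fun η => Fq n Ht (qfD Y₁ r) η - Fq n Ht (qfD Y₁ s) η) volume 0 y := hIIr.sub hIIs
  have hcast2 : ((n - 2 : ℕ) : ℝ) = (n:ℝ) - 2 := by rw [Nat.cast_sub (by omega)]; norm_num
  have hcast1 : ((n - 1 : ℕ) : ℝ) = (n:ℝ) - 1 := by rw [Nat.cast_sub (by omega)]; norm_num
  have d1 : (3 * (n:ℝ) * R ^ 2 * d) / (((n - 2 : ℕ):ℝ) + 1) ≤ (9/2) * (R ^ 2 * d) := by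
    rw [hcast2, div_le_iff₀ (by linarith)]
    have h0 : (0:ℝ) ≤ R ^ 2 * d := by positivity
    nlinarith
  have d2 : (3 * (n:ℝ) * C * R * (1 + R ^ 2) * d) / (((n - 1 : ℕ):ℝ) + 1)
      ≤ 3 * (C * R * (1 + R ^ 2) * d) := by
    rw [hcast1, div_le_iff₀ (by linarith)]
    have h0 : (0:ℝ) ≤ C * R * (1 + R ^ 2) * d := by positivity
    nlinarith
  have hest := est' (n-2) (n-1) _ _ ((9/2) * (R ^ 2 * d)) (3 * (C * R * (1 + R ^ 2) * d))
    (by positivity) (by positivity) d1 d2 hy0 hsub hb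
  have hzp : (0:ℝ) < y ^ ((1:ℤ) - n) := zpow_pos hy0 _
  have hkey : PhiVal n Ht Y₁ r y - PhiVal n Ht Y₁ s y
      = y ^ ((1:ℤ) - n) * ∫ η in (0:ℝ)..y,
          (Fq n Ht (qfD Y₁ r) η - Fq n Ht (qfD Y₁ s) η) := by
    rw [intervalIntegral.integral_sub hIIr hIIs, PhiVal, PhiVal]; ring
  rw [hkey, abs_mul, abs_of_nonneg hzp.le]
  calc y ^ ((1:ℤ) - n) * |∫ η in (0:ℝ)..y,
          (Fq n Ht (qfD Y₁ r) η - Fq n Ht (qfD Y₁ s) η)|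
      ≤ y ^ ((1:ℤ) - n) * ((9/2) * (R ^ 2 * d) * y ^ ((n-2)+1)
          + 3 * (C * R * (1 + R ^ 2) * d) * y ^ ((n-1)+1)) :=
        mul_le_mul_of_nonneg_left hest hzp.le
    _ = (9/2) * (R ^ 2 * d) * (y ^ ((1:ℤ) - n) * y ^ ((n-2)+1))
        + 3 * (C * R * (1 + R ^ 2) * d) * (y ^ ((1:ℤ) - n) * y ^ ((n-1)+1)) := by ring
    _ = (9/2) * (R ^ 2 * d) + 3 * (C * R * (1 + R ^ 2) * d) * y := by
        rw [hz2 n hn hy0.ne', hz3 n hn hy0.ne']; ring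
    _ ≤ (1/2) * d := by
        have hR2 : R ^ 2 ≤ 1/16 := by nlinarith
        have h1 : (9/2) * (R ^ 2 * d) ≤ (9/32) * d := by nlinarith
        have hCY : C * Y₁ ≤ 1/100 := by
          have h100 : (0:ℝ) < 100 * (C + 1) := by positivity
          have hYle : Y₁ * (100 * (C + 1)) ≤ 1 := by
            rw [← le_div_iff₀ h100]; exact hs2
          nlinarith [mul_nonneg hC hY₁.le]
        have hyY : y ≤ Y₁ := hy1
        have h2 : 3 * (C * R * (1 + R ^ 2) * d) * y ≤ (1/100) * d := by
          have e1 : R * (1 + R ^ 2) ≤ (1/4) * (17/16) := by nlinarith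
          have e2 : C * y ≤ 1/100 := by nlinarith [mul_nonneg hC hy0.le]
          nlinarith [mul_nonneg (mul_nonneg hC hy0.le) hd0,
            mul_nonneg hC hy0.le, mul_nonneg hR0 hd0]
        linarith
  
end Stmt0Aux
namespace Stmt0Aux

def Sol (n : ℕ) (Ht : ℝ → ℝ) (M Y₁ : ℝ) (q : ℝ → ℝ) : Prop :=
  ContinuousOn q (Set.Ioc 0 Y₁) ∧ (∀ y ∈ Set.Ioc (0:ℝ) Y₁, |q y / y| ≤ M) ∧
  (∀ y ∈ Set.Ioc (0:ℝ) Y₁, q y = y ^ (2 - (n:ℤ)) * ∫ η in (0:ℝ)..y, Fq n Ht q η)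

theorem main_case (n : ℕ) (hn : 3 ≤ n) (Ht : ℝ → ℝ) {C M Y₁ : ℝ}
    (hC : 0 ≤ C) (hM : 2 * C + 1 ≤ M) (hY₁ : 0 < Y₁)
    (hHtb : ∀ y ∈ Set.Ioc (0:ℝ) Y₁, |Ht y| ≤ C)
    (hmeas : AEMeasurable Ht (volume.restrict (Set.Ioc 0 Y₁)))
    (hs1 : M * Y₁ ≤ 1/4) (hs2 : Y₁ ≤ 1/(100*(C+1))) :
    ∃ q : ℝ → ℝ, Sol n Ht M Y₁ q ∧
      ∀ q', Sol n Ht M Y₁ q' → Set.EqOn q q' (Set.Ioc 0 Y₁) := by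
  classical
  have hM0 : (0:ℝ) < M := by linarith
  set B := Metric.closedBall (0 : BoundedContinuousFunction (Set.Ioc (0:ℝ) Y₁) ℝ) M with hB
  have hnorm : ∀ r : B, ‖(r.1 : BoundedContinuousFunction (Set.Ioc (0:ℝ) Y₁) ℝ)‖ ≤ M := by
    intro r
    have h := Metric.mem_closedBall.1 r.2
    rwa [dist_zero_right] at h
  let Φ : B → B := fun r =>
    ⟨BoundedContinuousFunction.ofNormedAddCommGroup
      (fun x : (Set.Ioc (0:ℝ) Y₁) => PhiVal n Ht Y₁ r.1 x)
      ((PhiVal_continuousOn n Ht r.1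
        (qfD_int n hn Ht hC hM0.le hY₁ hHtb hmeas r.1 (hnorm r))).restrict)
      M (fun x => by
        rw [Real.norm_eq_abs]
        exact PhiVal_bound n hn Ht hC hM hY₁ hHtb hmeas hs1 r.1 (hnorm r) x x.2),
     by
      rw [Metric.mem_closedBall, dist_zero_right]
      refine (BoundedContinuousFunction.norm_le hM0.le).2 ?_
      intro x
      rw [Real.norm_eq_abs]
      exact PhiVal_bound n hn Ht hC hM hY₁ hHtb hmeas hs1 r.1 (hnorm r) x x.2⟩
  have hΦlip : ∀ r s : B, dist (Φ r) (Φ s) ≤ (1/2) * dist r.1 s.1 := by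
    intro r s
    rw [Subtype.dist_eq]
    refine (BoundedContinuousFunction.dist_le (by positivity)).2 ?_
    intro x
    rw [Real.dist_eq]
    exact PhiVal_contract n hn Ht hC hM hY₁ hHtb hmeas hs1 hs2 r.1 s.1
      (hnorm r) (hnorm s) x x.2
  have hcw : ContractingWith (1/2 : NNReal) Φ := by
    constructor
    · rw [← NNReal.coe_lt_coe]; norm_num
    · apply LipschitzWith.of_dist_le_mul
      intro r s
      have h := hΦlip r s
      have hco : ((1/2 : NNReal) : ℝ) = 1/2 := by norm_num
      rw [hco]
      calc dist (Φ r) (Φ s) ≤ (1/2) * dist r.1 s.1 := h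
        _ = (1/2) * dist r s := by rw [Subtype.dist_eq]
  haveI : Nonempty B := ⟨⟨0, Metric.mem_closedBall_self hM0.le⟩⟩
  haveI : CompleteSpace B := IsClosed.completeSpace_coe (hs := Metric.isClosed_closedBall)
  set rstar := ContractingWith.fixedPoint Φ hcw with hrstar
  have hfix : Φ rstar = rstar := hcw.fixedPoint_isFixedPt
  have happly : ∀ x : (Set.Ioc (0:ℝ) Y₁), PhiVal n Ht Y₁ rstar.1 x = rstar.1 x := by
    intro x
    have h1 := congrArg (fun f : B => (f.1 : (Set.Ioc (0:ℝ) Y₁) → ℝ) x) hfix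
    exact h1
  refine ⟨qfD Y₁ rstar.1, ⟨qfD_continuousOn _ _, ?_, ?_⟩, ?_⟩
  · -- bound
    intro y hy
    rw [qfD_apply Y₁ _ hy]
    rw [mul_comm, mul_div_assoc, div_self (ne_of_gt hy.1), mul_one]
    exact le_trans (by simpa [Real.norm_eq_abs] using rstar.1.norm_coe_le_norm ⟨y, hy⟩)
      (hnorm rstar)
  · -- integral equation
    intro y hy
    rw [qfD_apply Y₁ _ hy, ← happly ⟨y, hy⟩, PhiVal, ← mul_assoc, hz4 n (ne_of_gt hy.1)]
  · -- uniqueness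
    intro q' hSol'
    obtain ⟨hc', hb', he'⟩ := hSol'
    have hcr' : Continuous (fun x : (Set.Ioc (0:ℝ) Y₁) => q' x / x) :=
      (hc'.div continuousOn_id (fun y hy => ne_of_gt hy.1)).restrict
    set r' := BoundedContinuousFunction.ofNormedAddCommGroup
      (fun x : (Set.Ioc (0:ℝ) Y₁) => q' x / x) hcr' M
      (fun x => by rw [Real.norm_eq_abs]; exact hb' x x.2) with hr'def
    have hr'mem : r' ∈ B := by
      rw [hB, Metric.mem_closedBall, dist_zero_right]
      refine (BoundedContinuousFunction.norm_le hM0.le).2 ?_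
      intro x
      rw [Real.norm_eq_abs]
      exact hb' x x.2
    have hqf' : ∀ η ∈ Set.Ioc (0:ℝ) Y₁, qfD Y₁ r' η = q' η := by
      intro η hη
      rw [qfD_apply Y₁ r' hη]
      show η * (q' η / η) = q' η
      rw [mul_comm, div_mul_cancel₀ _ (ne_of_gt hη.1)]
    have hFq' : ∀ x ∈ Set.Ioc (0:ℝ) Y₁,
        (∫ η in (0:ℝ)..x, Fq n Ht (qfD Y₁ r') η) = ∫ η in (0:ℝ)..x, Fq n Ht q' η := by
      intro x hx
      rw [intervalIntegral.integral_of_le hx.1.le, intervalIntegral.integral_of_le hx.1.le]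
      apply setIntegral_congr_fun measurableSet_Ioc
      intro η hη
      have hη' : η ∈ Set.Ioc (0:ℝ) Y₁ := ⟨hη.1, hη.2.trans hx.2⟩
      unfold Fq
      rw [hqf' η hη']
    have hfix' : Φ ⟨r', hr'mem⟩ = ⟨r', hr'mem⟩ := by
      apply Subtype.ext
      apply BoundedContinuousFunction.ext
      intro x
      show PhiVal n Ht Y₁ r' x = q' x / x
      have hxne : (x:ℝ) ≠ 0 := ne_of_gt x.2.1
      rw [PhiVal, hFq' x x.2, eq_div_iff hxne, he' x x.2, ← hz4 n hxne]
      ring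
    have huniq := hcw.fixedPoint_unique (x := ⟨r', hr'mem⟩) hfix'
    have hval : r' = rstar.1 := congrArg Subtype.val huniq
    intro y hy
    show qfD Y₁ rstar.1 y = q' y
    rw [← hval, hqf' y hy]

end Stmt0Aux
namespace Stmt0Aux

lemma degen_integral_zero (n : ℕ) (hn : 3 ≤ n) (Ht : ℝ → ℝ) {Y₁ : ℝ}
    (hbad : ∀ a : ℝ, 0 < a → ¬ AEMeasurable Ht (volume.restrict (Set.Ioc 0 a)))
    {q' : ℝ → ℝ} (hc : ContinuousOn q' (Set.Ioc 0 Y₁)) :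
    ∀ y ∈ Set.Ioc (0:ℝ) Y₁, (∫ η in (0:ℝ)..y, Fq n Ht q' η) = 0 := by
  intro y hy
  apply intervalIntegral.integral_undef
  intro hII
  apply hbad y hy.1
  have hInt : IntegrableOn (Fq n Ht q') (Set.Ioc 0 y) volume :=
    (intervalIntegrable_iff_integrableOn_Ioc_of_le hy.1.le).1 hII
  have hF : AEMeasurable (Fq n Ht q') (volume.restrict (Set.Ioc 0 y)) :=
    hInt.1.aemeasurable
  have hq : ContinuousOn q' (Set.Ioc 0 y) := hc.mono (Set.Ioc_subset_Ioc_right hy.2)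
  have hq'm : AEMeasurable q' (volume.restrict (Set.Ioc 0 y)) :=
    hq.aemeasurable measurableSet_Ioc
  have hA : AEMeasurable (fun η => -((n:ℝ)-2) * q' η ^ 3 * η ^ (n-3))
      (volume.restrict (Set.Ioc 0 y)) :=
    ((hq'm.pow_const 3).const_mul _).mul ((measurable_id.pow_const _).aemeasurable)
  have hP : AEMeasurable (fun η => (1 + q' η ^ 2) ^ ((3:ℝ)/2))
      (volume.restrict (Set.Ioc 0 y)) := by
    have hcont : Continuous (fun v : ℝ => Real.sqrt (1 + v ^ 2) ^ 3) := by continuity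
    have h2 : AEMeasurable (fun η => Real.sqrt (1 + q' η ^ 2) ^ 3)
        (volume.restrict (Set.Ioc 0 y)) := hcont.measurable.comp_aemeasurable hq'm
    have heq : (fun η => Real.sqrt (1 + q' η ^ 2) ^ 3)
        = (fun η => (1 + q' η ^ 2) ^ ((3:ℝ)/2)) := by
      funext η; rw [rpow32 _ (by positivity)]
    exact heq ▸ h2
  have hB : AEMeasurable
      (fun η => ((n:ℝ)-1) * η * ((1 + q' η ^ 2) ^ ((3:ℝ)/2)) * η ^ (n-3))
      (volume.restrict (Set.Ioc 0 y)) :=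
    ((aemeasurable_id.const_mul _).mul hP).mul ((measurable_id.pow_const _).aemeasurable)
  refine ((hF.sub hA).mul hB.inv).congr ?_
  refine (ae_restrict_iff' measurableSet_Ioc).2 (Filter.Eventually.of_forall fun η hη => ?_)
  have hn1 : (0:ℝ) < (n:ℝ) - 1 := by
    have : (3:ℝ) ≤ (n:ℝ) := by exact_mod_cast hn
    linarith
  have hBpos : (0:ℝ) < ((n:ℝ)-1) * η * ((1 + q' η ^ 2) ^ ((3:ℝ)/2)) * η ^ (n-3) := by
    exact mul_pos (mul_pos (mul_pos hn1 hη.1) (pos32 _)) (pow_pos hη.1 _)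
  have hdiff : Fq n Ht q' η - (-((n:ℝ)-2) * q' η ^ 3 * η ^ (n-3))
      = Ht η * (((n:ℝ)-1) * η * ((1 + q' η ^ 2) ^ ((3:ℝ)/2)) * η ^ (n-3)) := by
    unfold Fq; ring
  show (Fq n Ht q' η - (-((n:ℝ)-2) * q' η ^ 3 * η ^ (n-3)))
      * (((n:ℝ)-1) * η * ((1 + q' η ^ 2) ^ ((3:ℝ)/2)) * η ^ (n-3))⁻¹ = Ht η
  rw [hdiff, mul_inv_cancel_right₀ (ne_of_gt hBpos)]

theorem degen_case (n : ℕ) (hn : 3 ≤ n) (Ht : ℝ → ℝ) {M Y₁ : ℝ}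
    (hM : 0 ≤ M) (hY₁ : 0 < Y₁)
    (hbad : ∀ a : ℝ, 0 < a → ¬ AEMeasurable Ht (volume.restrict (Set.Ioc 0 a))) :
    ∃ q : ℝ → ℝ, Sol n Ht M Y₁ q ∧
      ∀ q', Sol n Ht M Y₁ q' → Set.EqOn q q' (Set.Ioc 0 Y₁) := by
  refine ⟨fun _ => 0, ⟨continuousOn_const, ?_, ?_⟩, ?_⟩
  · intro y hy
    simpa using hM
  · intro y hy
    rw [degen_integral_zero n hn Ht hbad continuousOn_const y hy, mul_zero]
  · intro q' hS' y hy
    show (0:ℝ) = q' y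
    rw [hS'.2.2 y hy, degen_integral_zero n hn Ht hbad hS'.1 y hy, mul_zero]

end Stmt0Aux
/-- Existence and uniqueness of a solution to the singular integral equation for the slope
`q = x'/y'` of the generating curve of a rotational hypersurface of `O(n-1)`-type, in the class
`X_{Y,M} = {q ∈ C(0,Y] : sup |q(y)/y| ≤ M}`, for sufficiently large `M` and small `Y`. -/
theorem stmt_0 (n : ℕ) (hn : 3 ≤ n) (Y : ℝ) (hY : 0 < Y) (Ht : ℝ → ℝ)
    (hHt : ∃ C : ℝ, ∀ y ∈ Set.Icc (0:ℝ) Y, |Ht y| ≤ C) :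
    ∃ M₀ > (0:ℝ), ∀ M ≥ M₀, ∃ Y₂ > (0:ℝ), ∀ Y₁, 0 < Y₁ → Y₁ ≤ Y₂ → Y₁ ≤ Y →
      ∃ q : ℝ → ℝ,
        (ContinuousOn q (Set.Ioc 0 Y₁) ∧
          (∀ y ∈ Set.Ioc (0:ℝ) Y₁, |q y / y| ≤ M) ∧
          (∀ y ∈ Set.Ioc (0:ℝ) Y₁,
            q y = y ^ (2 - (n:ℤ)) *
              ∫ η in (0:ℝ)..y,
                (-((n:ℝ) - 2) * q η ^ 3
                  + ((n:ℝ) - 1) * Ht η * η * (1 + q η ^ 2) ^ ((3:ℝ)/2)) * η ^ (n - 3))) ∧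
        (∀ q' : ℝ → ℝ,
          (ContinuousOn q' (Set.Ioc 0 Y₁) ∧
            (∀ y ∈ Set.Ioc (0:ℝ) Y₁, |q' y / y| ≤ M) ∧
            (∀ y ∈ Set.Ioc (0:ℝ) Y₁,
              q' y = y ^ (2 - (n:ℤ)) *
                ∫ η in (0:ℝ)..y,
                  (-((n:ℝ) - 2) * q' η ^ 3
                    + ((n:ℝ) - 1) * Ht η * η * (1 + q' η ^ 2) ^ ((3:ℝ)/2)) * η ^ (n - 3))) →
          Set.EqOn q q' (Set.Ioc 0 Y₁)) := by
  classical
  obtain ⟨C₀, hC₀⟩ := hHt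
  set C := max C₀ 0 with hCdef
  have hC : (0:ℝ) ≤ C := le_max_right _ _
  have hCb : ∀ y ∈ Set.Icc (0:ℝ) Y, |Ht y| ≤ C := fun y hy =>
    (hC₀ y hy).trans (le_max_left _ _)
  by_cases hm : ∃ a : ℝ, 0 < a ∧ AEMeasurable Ht (MeasureTheory.volume.restrict (Set.Ioc 0 a))
  · obtain ⟨a, ha0, hameas⟩ := hm
    refine ⟨2 * C + 1, by linarith, fun M hM => ?_⟩
    have hM0 : (0:ℝ) < M := by linarith [le_of_max_le_left (le_refl C)]
    refine ⟨min (min Y a) (min (1/(4*M)) (1/(100*(C+1)))), by positivity, ?_⟩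
    intro Y₁ hY₁0 hY₁2 hY₁Y
    have h1 : Y₁ ≤ a := le_trans hY₁2 (le_trans (min_le_left _ _) (min_le_right _ _))
    have h2 : Y₁ ≤ 1/(4*M) := le_trans hY₁2 (le_trans (min_le_right _ _) (min_le_left _ _))
    have h3 : Y₁ ≤ 1/(100*(C+1)) :=
      le_trans hY₁2 (le_trans (min_le_right _ _) (min_le_right _ _))
    have hs1 : M * Y₁ ≤ 1/4 := by
      have h4 : Y₁ * (4*M) ≤ 1 := by rw [← le_div_iff₀ (by positivity)]; exact h2
      nlinarith
    have hHtb : ∀ y ∈ Set.Ioc (0:ℝ) Y₁, |Ht y| ≤ C := fun y hy =>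
      hCb y ⟨hy.1.le, hy.2.trans hY₁Y⟩
    have hmeas : AEMeasurable Ht (MeasureTheory.volume.restrict (Set.Ioc 0 Y₁)) :=
      hameas.mono_measure
        (MeasureTheory.Measure.restrict_mono (Set.Ioc_subset_Ioc_right h1) le_rfl)
    obtain ⟨q, hq, huni⟩ := Stmt0Aux.main_case n hn Ht hC hM hY₁0 hHtb hmeas hs1 h3
    exact ⟨q, hq, huni⟩
  · push_neg at hm
    refine ⟨1, one_pos, fun M hM => ⟨Y, hY, ?_⟩⟩
    intro Y₁ hY₁0 _ _
    obtain ⟨q, hq, huni⟩ := Stmt0Aux.degen_case n hn Ht (M := M) (by linarith) hY₁0 hm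
    exact ⟨q, hq, huni⟩
end

section
/- Let n ≥ 3 and let H : ℝ → ℝ be absolutely continuous with H(0) > 0, H'(s) ≥ 0 for a.e. s > 0 and H'(s) ≤ 0 for a.e. s < 0. Let (x_c, y_c) be the unit-speed solution of the rotational hypersurface equation (n-1)H = (n-2) x'/y + x''y' - x'y'' with x_c(0)=0, y_c(0)=c, x_c'(0)=1, y_c'(0)=0. If c > 1/H(0), then y_c(s) > 0 for all s ∈ ℝ. -/
open MeasureTheory Set intervalIntegral

lemma lemA (H G G' : ℝ → ℝ) (b : ℝ) (hb : 0 ≤ b)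
    (hHm : Monotone H) (hHc : Continuous H)
    (hG : ∀ t, HasDerivAt G (G' t) t) (hG'c : Continuous G')
    (hGnn : ∀ u ∈ Set.Ioc (0:ℝ) b, 0 ≤ G u) :
    ∫ t in (0:ℝ)..b, H t * G' t ≤ H b * G b - H 0 * G 0 := by
  set S : StieltjesFunction ℝ := ⟨H, hHm, fun x => (hHc.continuousAt).continuousWithinAt⟩ with hS
  set μ := S.measure with hμ
  have hSapp : ∀ t, S t = H t := fun t => rfl
  have hmIoc : ∀ a t : ℝ, μ (Ioc a t) = ENNReal.ofReal (H t - H a) := fun a t =>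
    S.measure_Ioc a t
  haveI : IsFiniteMeasure (μ.restrict (Ioc 0 b)) := by
    constructor
    rw [Measure.restrict_apply_univ, hmIoc]
    exact ENNReal.ofReal_lt_top
  -- representation of H t - H 0 as an integral
  have hrep : ∀ t ∈ Icc (0:ℝ) b,
      H t - H 0 = ∫ u in Ioc (0:ℝ) b, (if u ≤ t then (1:ℝ) else 0) ∂μ := by
    intro t ht
    have : (fun u => if u ≤ t then (1:ℝ) else 0) = (Iic t).indicator (fun _ => (1:ℝ)) := by
      ext u; simp [Set.indicator_apply, Set.mem_Iic]
    rw [this, integral_indicator_const (1:ℝ) measurableSet_Iic, measureReal_def,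
      Measure.restrict_apply measurableSet_Iic]
    have : Iic t ∩ Ioc 0 b = Ioc 0 t := by
      ext u; simp only [mem_inter_iff, mem_Iic, mem_Ioc]
      constructor
      · rintro ⟨h1, h2, h3⟩; exact ⟨h2, h1⟩
      · rintro ⟨h1, h2⟩; exact ⟨h2, h1, h2.trans ht.2⟩
    rw [this, hmIoc]
    rw [ENNReal.toReal_ofReal (by linarith [hHm ht.1] : (0:ℝ) ≤ H t - H 0)]
    simp
  have hGc : Continuous G := continuous_iff_continuousAt.mpr fun t => (hG t).continuousAt
  have hGint : ∀ a b : ℝ, ∫ t in a..b, G' t = G b - G a := fun a b =>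
    intervalIntegral.integral_eq_sub_of_hasDerivAt (fun t _ => hG t)
      (hG'c.intervalIntegrable a b)
  obtain ⟨C, hC⟩ := (isCompact_Icc (a := (0:ℝ)) (b := b)).exists_bound_of_continuousOn
    hG'c.continuousOn
  have h1 : IntervalIntegrable (fun t => H t * G' t) volume 0 b :=
    (hHc.mul hG'c).intervalIntegrable _ _
  have h2 : IntervalIntegrable (fun t => H 0 * G' t) volume 0 b :=
    (continuous_const.mul hG'c).intervalIntegrable _ _
  have hsplit : ∫ t in (0:ℝ)..b, (H t - H 0) * G' t
      = (∫ t in (0:ℝ)..b, H t * G' t) - H 0 * (G b - G 0) := by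
    rw [← hGint 0 b, ← intervalIntegral.integral_const_mul,
      ← intervalIntegral.integral_sub h1 h2]
    congr 1; ext t; ring
  have hmain : ∫ t in (0:ℝ)..b, (H t - H 0) * G' t ≤ (H b - H 0) * G b := by
    haveI : IsFiniteMeasure (volume.restrict (Ioc (0:ℝ) b)) := by
      constructor
      rw [Measure.restrict_apply_univ, Real.volume_Ioc]
      exact ENNReal.ofReal_lt_top
    have hint : Integrable (Function.uncurry fun t u => (if u ≤ t then (1:ℝ) else 0) * G' t)
        ((volume.restrict (Ioc (0:ℝ) b)).prod (μ.restrict (Ioc 0 b))) := by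
      apply Integrable.mono' (g := fun _ => |C|) (integrable_const _)
      · apply Measurable.aestronglyMeasurable
        exact (Measurable.ite (measurableSet_le measurable_snd measurable_fst)
          measurable_const measurable_const).mul (hG'c.measurable.comp measurable_fst)
      · rw [Measure.prod_restrict]
        filter_upwards [ae_restrict_mem (measurableSet_Ioc.prod measurableSet_Ioc)] with p hp
        obtain ⟨hp1, _⟩ := hp
        have hb1 : ‖G' p.1‖ ≤ C := hC p.1 (Ioc_subset_Icc_self hp1)
        calc ‖(if p.2 ≤ p.1 then (1:ℝ) else 0) * G' p.1‖
            = ‖(if p.2 ≤ p.1 then (1:ℝ) else 0)‖ * ‖G' p.1‖ := norm_mul _ _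
          _ ≤ 1 * C := by
              apply mul_le_mul _ hb1 (norm_nonneg _) zero_le_one
              split <;> simp
          _ ≤ |C| := by rw [one_mul]; exact le_abs_self C
    have hswap := MeasureTheory.integral_integral_swap hint
    have hinner : ∀ u ∈ Ioc (0:ℝ) b,
        (∫ t in Ioc (0:ℝ) b, (if u ≤ t then (1:ℝ) else 0) * G' t) = G b - G u := by
      intro u hu
      have he : (fun t => (if u ≤ t then (1:ℝ) else 0) * G' t) = (Ici u).indicator G' := by
        ext t; simp [Set.indicator_apply, mem_Ici, ite_mul]
      rw [he, setIntegral_indicator measurableSet_Ici]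
      have he2 : Ioc (0:ℝ) b ∩ Ici u = Icc u b := by
        ext t; simp only [mem_inter_iff, mem_Ioc, mem_Ici, mem_Icc]
        constructor
        · rintro ⟨⟨_, h2⟩, h3⟩; exact ⟨h3, h2⟩
        · rintro ⟨h1, h2⟩; exact ⟨⟨lt_of_lt_of_le hu.1 h1, h2⟩, h1⟩
      rw [he2, integral_Icc_eq_integral_Ioc, ← intervalIntegral.integral_of_le hu.2, hGint u b]
    calc ∫ t in (0:ℝ)..b, (H t - H 0) * G' t
        = ∫ t in Ioc (0:ℝ) b, (H t - H 0) * G' t := intervalIntegral.integral_of_le hb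
      _ = ∫ t in Ioc (0:ℝ) b, (∫ u in Ioc (0:ℝ) b,
            (if u ≤ t then (1:ℝ) else 0) * G' t ∂μ) := by
          apply setIntegral_congr_fun measurableSet_Ioc
          intro t ht
          show (H t - H 0) * G' t
            = ∫ u in Ioc (0:ℝ) b, (if u ≤ t then (1:ℝ) else 0) * G' t ∂μ
          rw [MeasureTheory.integral_mul_const, ← hrep t (Ioc_subset_Icc_self ht)]
      _ = ∫ u in Ioc (0:ℝ) b, (∫ t in Ioc (0:ℝ) b,
            (if u ≤ t then (1:ℝ) else 0) * G' t) ∂μ := hswap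
      _ = ∫ u in Ioc (0:ℝ) b, (G b - G u) ∂μ := by
          exact setIntegral_congr_fun measurableSet_Ioc fun u hu => hinner u hu
      _ ≤ ∫ u in Ioc (0:ℝ) b, G b ∂μ := by
          refine setIntegral_mono_on
            (((continuous_const.sub hGc).integrableOn_Icc).mono_set Ioc_subset_Icc_self)
            (integrableOn_const (by rw [hmIoc]; exact ENNReal.ofReal_ne_top))
            measurableSet_Ioc fun u hu => by linarith [hGnn u hu]
      _ = (H b - H 0) * G b := by
          rw [setIntegral_const, measureReal_def, hmIoc, smul_eq_mul]
          rw [ENNReal.toReal_ofReal (by linarith [hHm hb] : (0:ℝ) ≤ H b - H 0)]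
  linarith [hsplit, hmain]

lemma key (n : ℕ) (hn : 3 ≤ n) (H x' y y' x'' y'' : ℝ → ℝ) (c : ℝ)
    (hHc : Continuous H) (hH0 : 0 < H 0)
    (hmono : MonotoneOn H (Set.Ici 0))
    (hy : ∀ s, HasDerivAt y (y' s) s)
    (hx' : ∀ s, HasDerivAt x' (x'' s) s) (hy' : ∀ s, HasDerivAt y' (y'' s) s)
    (hunit : ∀ s, x' s ^ 2 + y' s ^ 2 = 1)
    (heq : ∀ s, y s ≠ 0 →
      ((n:ℝ) - 1) * H s = ((n:ℝ) - 2) * x' s / y s + x'' s * y' s - x' s * y'' s)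
    (hy0 : y 0 = c) (hx'0 : x' 0 = 1)
    (hc : 1 / H 0 < c) :
    ∀ s ≥ 0, 0 < y s := by
  have hc0 : 0 < c := lt_trans (by positivity) hc
  have hc1 : 1 < H 0 * c := by
    rw [div_lt_iff₀ hH0] at hc; linarith
  set m := n - 3 with hm
  have hnm : n = m + 3 := by omega
  have hyc : Continuous y := continuous_iff_continuousAt.mpr fun t => (hy t).continuousAt
  have hx'c : Continuous x' := continuous_iff_continuousAt.mpr fun t => (hx' t).continuousAt
  have hy'c : Continuous y' := continuous_iff_continuousAt.mpr fun t => (hy' t).continuousAt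
  -- the orthogonality relation
  have hortho : ∀ s, x' s * x'' s + y' s * y'' s = 0 := by
    intro s
    have h1 : HasDerivAt (fun s => x' s ^ 2 + y' s ^ 2)
        (2 * x' s ^ 1 * x'' s + 2 * y' s ^ 1 * y'' s) s := ((hx' s).pow 2).add ((hy' s).pow 2)
    have h2 : (fun s => x' s ^ 2 + y' s ^ 2) = fun _ => (1:ℝ) := funext hunit
    rw [h2] at h1
    have h3 := (hasDerivAt_const s (1:ℝ)).unique h1
    nlinarith [h3]
  by_contra hcon
  push_neg at hcon
  obtain ⟨s₁, hs₁, hys₁⟩ := hcon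
  -- first zero of y
  set Z : Set ℝ := {s | 0 ≤ s ∧ y s = 0} with hZ
  have hZne : Z.Nonempty := by
    rcases eq_or_lt_of_le hys₁ with h | h
    · exact ⟨s₁, hs₁, h⟩
    · obtain ⟨z, hz, hyz⟩ := intermediate_value_Icc' hs₁ hyc.continuousOn
        (by rw [hy0]; exact ⟨le_of_lt h, le_of_lt hc0⟩ : (0:ℝ) ∈ Set.Icc (y s₁) (y 0))
      exact ⟨z, hz.1, hyz⟩
  have hZcl : IsClosed Z := by
    have : Z = Set.Ici (0:ℝ) ∩ y ⁻¹' {0} := by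
      ext t; simp [hZ, Set.mem_Ici]
    rw [this]
    exact isClosed_Ici.inter (isClosed_singleton.preimage hyc)
  have hZbd : BddBelow Z := ⟨0, fun t ht => ht.1⟩
  set s₀ := sInf Z with hs₀
  have hs₀Z : s₀ ∈ Z := hZcl.csInf_mem hZne hZbd
  have hs₀0 : 0 ≤ s₀ := hs₀Z.1
  have hys₀ : y s₀ = 0 := hs₀Z.2
  have hs₀pos : 0 < s₀ := by
    rcases eq_or_lt_of_le hs₀0 with h | h
    · exfalso; rw [← h, hy0] at hys₀; linarith
    · exact h
  -- positivity on [0, s₀)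
  have hpos : ∀ t ∈ Set.Ico (0:ℝ) s₀, 0 < y t := by
    intro t ht
    by_contra hyt
    push_neg at hyt
    rcases eq_or_lt_of_le hyt with h | h
    · exact absurd (csInf_le hZbd ⟨ht.1, h⟩) (not_le.mpr ht.2)
    · obtain ⟨z, hz, hyz⟩ := intermediate_value_Icc' ht.1 hyc.continuousOn
        (by rw [hy0]; exact ⟨le_of_lt h, le_of_lt hc0⟩ : (0:ℝ) ∈ Set.Icc (y t) (y 0))
      exact absurd (csInf_le hZbd ⟨hz.1, hyz⟩) (not_le.mpr (lt_of_le_of_lt hz.2 ht.2))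
  -- the auxiliary functions
  set G : ℝ → ℝ := fun t => y t ^ (m + 2) with hG
  set G' : ℝ → ℝ := fun t => ((m:ℝ) + 2) * y t ^ (m + 1) * y' t with hG'd
  have hGderiv : ∀ t, HasDerivAt G (G' t) t := by
    intro t
    have := (hy t).fun_pow (m + 2)
    simpa [hG, hG'd] using this
  have hG'c : Continuous G' := by
    apply Continuous.mul (Continuous.mul continuous_const (hyc.pow _)) hy'c
  set f : ℝ → ℝ := fun t => y t ^ (m + 1) * x' t with hf
  have hfderiv : ∀ t ∈ Set.Ico (0:ℝ) s₀, HasDerivAt f (H t * G' t) t := by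
    intro t ht
    have hyt : y t ≠ 0 := ne_of_gt (hpos t ht)
    have h1 : HasDerivAt f
        (((m:ℝ) + 1) * y t ^ m * y' t * x' t + y t ^ (m + 1) * x'' t) t := by
      have := ((hy t).fun_pow (m + 1)).fun_mul (hx' t)
      simpa [hf, mul_comm, mul_assoc, mul_left_comm] using this
    convert h1 using 1
    have he := heq t hyt
    rw [hnm] at he
    push_cast at he
    have he' : ((m:ℝ) + 2) * H t * y t
        = ((m:ℝ) + 1) * x' t + (x'' t * y' t - x' t * y'' t) * y t := by
      field_simp at he
      linarith [he]
    have ho := hortho t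
    have hu := hunit t
    have hkey : H t * G' t
        = ((m:ℝ) + 1) * y t ^ m * y' t * x' t + y t ^ (m + 1) * x'' t := by
      have hy1 : y t ^ (m + 1) = y t ^ m * y t := by ring
      calc H t * G' t = y t ^ m * y' t * (((m:ℝ) + 2) * H t * y t) := by
            rw [hG'd]; ring
        _ = y t ^ m * y' t * (((m:ℝ) + 1) * x' t + (x'' t * y' t - x' t * y'' t) * y t) := by
            rw [he']
        _ = ((m:ℝ) + 1) * y t ^ m * y' t * x' t
              + y t ^ (m+1) * (x'' t * y' t ^ 2 - x' t * (y' t * y'' t)) := by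
            rw [hy1]; ring
        _ = ((m:ℝ) + 1) * y t ^ m * y' t * x' t
              + y t ^ (m+1) * (x'' t * y' t ^ 2 + x' t * (x' t * x'' t)) := by
            rw [show y' t * y'' t = -(x' t * x'' t) by linarith [ho]]; ring
        _ = ((m:ℝ) + 1) * y t ^ m * y' t * x' t
              + y t ^ (m+1) * (x'' t * (x' t ^ 2 + y' t ^ 2)) := by ring
        _ = _ := by rw [hu]; ring
    rw [hkey]
  -- F, the integral of H * G'
  set F : ℝ → ℝ := fun t => ∫ u in (0:ℝ)..t, H u * G' u with hF
  have hFderiv : ∀ t, HasDerivAt F (H t * G' t) t := fun t =>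
    ((hHc.mul hG'c).integral_hasStrictDerivAt 0 t).hasDerivAt
  -- f = c^(m+1) + F on [0, s₀]
  have hfF : f s₀ = c ^ (m + 1) + F s₀ := by
    have := eq_of_has_deriv_right_eq (a := 0) (b := s₀)
      (f' := fun t => H t * G' t) (f := f) (g := fun t => c ^ (m + 1) + F t)
      (fun t ht => (hfderiv t ht).hasDerivWithinAt)
      (fun t _ => ((hFderiv t).const_add _).hasDerivWithinAt)
      (((hyc.pow _).mul hx'c).continuousOn)
      ((continuous_const.add (continuous_iff_continuousAt.mpr fun t =>
        (hFderiv t).continuousAt)).continuousOn)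
      (by simp [hf, hF, hy0, hx'0])
    exact this s₀ ⟨hs₀0, le_refl _⟩
  have hfs₀ : f s₀ = 0 := by
    simp [hf, hys₀]
  -- apply lemA with the clamped H
  set Ht : ℝ → ℝ := fun t => H (min (max t 0) s₀) with hHt
  have hHtm : Monotone Ht := by
    intro a b hab
    exact hmono (Set.mem_Ici.mpr (le_min (le_max_right _ _) hs₀0))
      (Set.mem_Ici.mpr (le_min (le_max_right _ _) hs₀0))
      (min_le_min (max_le_max hab (le_refl _)) (le_refl _))
  have hHtc : Continuous Ht :=
    hHc.comp ((continuous_id.max continuous_const).min continuous_const)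
  have hHteq : ∀ t ∈ Set.Icc (0:ℝ) s₀, Ht t = H t := by
    intro t ht
    show H ((t ⊔ 0) ⊓ s₀) = H t
    rw [max_eq_left ht.1, min_eq_left ht.2]
  have hGnn : ∀ u ∈ Set.Ioc (0:ℝ) s₀, 0 ≤ G u := by
    intro u hu
    apply pow_nonneg
    rcases eq_or_lt_of_le hu.2 with h | h
    · rw [h, hys₀]
    · exact le_of_lt (hpos u ⟨le_of_lt hu.1, h⟩)
  have hlem := lemA Ht G G' s₀ (le_of_lt hs₀pos) hHtm hHtc hGderiv hG'c hGnn
  have hint_eq : ∫ t in (0:ℝ)..s₀, Ht t * G' t = F s₀ := by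
    rw [hF]
    apply intervalIntegral.integral_congr
    intro t ht
    rw [Set.uIcc_of_le (le_of_lt hs₀pos)] at ht
    show Ht t * G' t = H t * G' t
    rw [hHteq t ht]
  rw [hint_eq] at hlem
  have hHts₀ : Ht s₀ = H s₀ := hHteq s₀ ⟨hs₀0, le_refl _⟩
  have hHt0 : Ht 0 = H 0 := hHteq 0 ⟨le_refl _, hs₀0⟩
  rw [hHts₀, hHt0] at hlem
  have hGs₀ : G s₀ = 0 := by simp [hG, hys₀]
  have hG0 : G 0 = c ^ (m + 2) := by simp [hG, hy0]
  rw [hGs₀, hG0, mul_zero, zero_sub] at hlem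
  -- contradiction
  have hFs₀ : F s₀ = -c ^ (m + 1) := by linarith [hfF, hfs₀]
  rw [hFs₀] at hlem
  have hcp : (0:ℝ) < c ^ (m + 1) := pow_pos hc0 _
  have : H 0 * c ^ (m + 2) ≤ c ^ (m + 1) := by linarith
  have hpow : c ^ (m + 2) = c ^ (m + 1) * c := by ring
  nlinarith [this, hcp, hc1]

/-- If the prescribed mean curvature `H` is continuous with `H(0) > 0`, nondecreasing on
`[0,∞)` and nonincreasing on `(-∞,0]` (the absolutely continuous formulation with
`H' ≥ 0` a.e. on `(0,∞)`, `H' ≤ 0` a.e. on `(-∞,0)`), and `c > 1/H(0)`, then the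
generating curve with `y(0) = c` stays in the upper half plane: `y_c > 0` on `ℝ`. -/
theorem stmt_3 (n : ℕ) (hn : 3 ≤ n) (H x y x' y' x'' y'' : ℝ → ℝ) (c : ℝ)
    (hHc : Continuous H) (hH0 : 0 < H 0)
    (hmono : MonotoneOn H (Set.Ici 0)) (hanti : AntitoneOn H (Set.Iic 0))
    (hx : ∀ s, HasDerivAt x (x' s) s) (hy : ∀ s, HasDerivAt y (y' s) s)
    (hx' : ∀ s, HasDerivAt x' (x'' s) s) (hy' : ∀ s, HasDerivAt y' (y'' s) s)
    (hunit : ∀ s, x' s ^ 2 + y' s ^ 2 = 1)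
    (heq : ∀ s, y s ≠ 0 →
      ((n:ℝ) - 1) * H s = ((n:ℝ) - 2) * x' s / y s + x'' s * y' s - x' s * y'' s)
    (hx0 : x 0 = 0) (hy0 : y 0 = c) (hx'0 : x' 0 = 1) (hy'0 : y' 0 = 0)
    (hc : 1 / H 0 < c) :
    ∀ s : ℝ, 0 < y s := by
  intro s
  rcases le_or_gt 0 s with hs | hs
  · exact key n hn H x' y y' x'' y'' c hHc hH0 hmono hy hx' hy' hunit heq hy0 hx'0 hc s hs
  · -- reflect
    have h := key n hn (fun t => H (-t)) (fun t => x' (-t)) (fun t => y (-t))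
      (fun t => -y' (-t)) (fun t => -x'' (-t)) (fun t => y'' (-t)) c
      (hHc.comp continuous_neg) (by simpa using hH0)
      (by
        intro a ha b hb hab
        exact hanti (Set.mem_Iic.mpr (by simpa using hb))
          (Set.mem_Iic.mpr (by simpa using ha)) (by linarith))
      (by
        intro t
        have := ((hy (-t)).comp t (hasDerivAt_neg t))
        simpa [mul_comm, Function.comp_def] using this)
      (by
        intro t
        have := ((hx' (-t)).comp t (hasDerivAt_neg t))
        simpa [mul_comm, Function.comp_def] using this)
      (by
        intro t
        have := ((hy' (-t)).comp t (hasDerivAt_neg t)).fun_neg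
        simpa [mul_comm, Function.comp_def] using this)
      (fun t => by simpa using hunit (-t))
      (by
        intro t ht
        have := heq (-t) ht
        rw [this]; ring)
      (by simpa using hy0) (by simpa using hx'0) (by simpa using hc)
    have := h (-s) (by linarith)
    simpa using this
end

section
/- Let n ≥ 3, H : ℝ → ℝ continuous, and for c > 0 let (F_c, G_c) solve F_c' = -(n-1)H G_c + (1/c){1 + (n-3)G_c²/(F_c²+G_c²)}, G_c' = (n-1)H F_c - (1/c)(n-3)F_c G_c/(F_c²+G_c²), with F_c(0)=0, G_c(0)=1, where F_c²+G_c² > 0. Let F_∞(s) = -sin η(s), G_∞(s) = cos η(s) with η(s) = (n-1)∫₀^s H(t)dt. Then (F_c(s)-F_∞(s))² + (G_c(s)-G_∞(s))² ≤ 2(n-2)² s²/c² for all s ∈ ℝ. -/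
set_option maxHeartbeats 1000000


/-- Quantitative convergence of `(F_c, G_c)` to `(F_∞, G_∞) = (-sin η, cos η)` with
`η(s) = (n-1)∫₀^s H`, for the normalized quantities of a rotational generating curve:
`(F_c - F_∞)² + (G_c - G_∞)² ≤ 2(n-2)² s²/c²`. -/
theorem stmt_4 (n : ℕ) (hn : 3 ≤ n) (H : ℝ → ℝ) (hH : Continuous H) (c : ℝ) (hc : 0 < c)
    (F G : ℝ → ℝ)
    (hFG : ∀ s, 0 < F s ^ 2 + G s ^ 2)
    (hF : ∀ s, HasDerivAt F
      (-((n:ℝ) - 1) * H s * G s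
        + (1 / c) * (1 + ((n:ℝ) - 3) * G s ^ 2 / (F s ^ 2 + G s ^ 2))) s)
    (hG : ∀ s, HasDerivAt G
      (((n:ℝ) - 1) * H s * F s
        - (1 / c) * (((n:ℝ) - 3) * F s * G s / (F s ^ 2 + G s ^ 2))) s)
    (hF0 : F 0 = 0) (hG0 : G 0 = 1) :
    ∀ s : ℝ,
      (F s - (-Real.sin (((n:ℝ) - 1) * ∫ t in (0:ℝ)..s, H t))) ^ 2
        + (G s - Real.cos (((n:ℝ) - 1) * ∫ t in (0:ℝ)..s, H t)) ^ 2
      ≤ 2 * ((n:ℝ) - 2) ^ 2 * s ^ 2 / c ^ 2 := by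
  intro s
  have hn3 : (3:ℝ) ≤ (n:ℝ) := by exact_mod_cast hn
  have hc' : c ≠ 0 := ne_of_gt hc
  set η : ℝ → ℝ := fun x => ((n:ℝ) - 1) * ∫ t in (0:ℝ)..x, H t with hη
  set Fi : ℝ → ℝ := fun x => -Real.sin (η x) with hFi
  set Gi : ℝ → ℝ := fun x => Real.cos (η x) with hGi
  set P : ℝ → ℝ := fun x => (1 / c) * (1 + ((n:ℝ) - 3) * G x ^ 2 / (F x ^ 2 + G x ^ 2)) with hP
  set Q : ℝ → ℝ := fun x => (1 / c) * (((n:ℝ) - 3) * F x * G x / (F x ^ 2 + G x ^ 2)) with hQ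
  set D : ℝ → ℝ := fun x => (F x - Fi x) ^ 2 + (G x - Gi x) ^ 2 with hD
  set K : ℝ := Real.sqrt 2 * ((n:ℝ) - 2) / c with hK
  have hK0 : 0 ≤ K := by
    apply div_nonneg _ hc.le
    exact mul_nonneg (Real.sqrt_nonneg _) (by linarith)
  have hKsq : K ^ 2 = 2 * ((n:ℝ) - 2) ^ 2 / c ^ 2 := by
    rw [hK, div_pow, mul_pow, Real.sq_sqrt (by norm_num : (0:ℝ) ≤ 2)]
  have hD0 : ∀ x, 0 ≤ D x := by
    intro x; rw [hD]; positivity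
  have hηd : ∀ x, HasDerivAt η (((n:ℝ) - 1) * H x) x := by
    intro x
    rw [hη]
    exact ((hH.integral_hasStrictDerivAt 0 x).hasDerivAt).const_mul _
  have hFid : ∀ x, HasDerivAt Fi (-(((n:ℝ) - 1) * H x) * Gi x) x := by
    intro x
    have h1 : HasDerivAt (fun y => Real.sin (η y)) (Real.cos (η x) * (((n:ℝ) - 1) * H x)) x :=
      (Real.hasDerivAt_sin (η x)).comp x (hηd x)
    rw [hFi]
    convert h1.neg using 1
    · rfl
    · rfl
    · rfl
    rw [hGi]; ring
  have hGid : ∀ x, HasDerivAt Gi (((n:ℝ) - 1) * H x * Fi x) x := by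
    intro x
    have h1 : HasDerivAt (fun y => Real.cos (η y)) (-Real.sin (η x) * (((n:ℝ) - 1) * H x)) x :=
      (Real.hasDerivAt_cos (η x)).comp x (hηd x)
    rw [hGi]
    convert h1 using 1
    rw [hFi]; ring
  have hDd : ∀ x, HasDerivAt D (2 * (F x - Fi x) * P x - 2 * (G x - Gi x) * Q x) x := by
    intro x
    have h1 := (((hF x).sub (hFid x)).pow 2).add (((hG x).sub (hGid x)).pow 2)
    rw [hD]
    convert h1 using 1
    · rfl
    · rfl
    · rfl
    simp only [hP, hQ, Pi.sub_apply]
    ring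
  have hPQ : ∀ x, P x ^ 2 + Q x ^ 2 ≤ K ^ 2 := by
    intro x
    have hq := hFG x
    have hm0 : (0:ℝ) ≤ (n:ℝ) - 3 := by linarith
    have hb : G x ^ 2 ≤ F x ^ 2 + G x ^ 2 := by nlinarith [sq_nonneg (F x)]
    have h1 : (F x ^ 2 + G x ^ 2 + ((n:ℝ) - 3) * G x ^ 2) ^ 2
        ≤ (((n:ℝ) - 2) * (F x ^ 2 + G x ^ 2)) ^ 2 := by
      apply pow_le_pow_left₀
      · nlinarith [mul_nonneg hm0 (sq_nonneg (G x))]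
      · nlinarith [mul_le_mul_of_nonneg_left hb hm0]
    have h2 : (((n:ℝ) - 3) * F x * G x) ^ 2 ≤ (((n:ℝ) - 2) * (F x ^ 2 + G x ^ 2)) ^ 2 := by
      nlinarith [mul_nonneg (mul_nonneg hm0 hm0) (sq_nonneg (F x ^ 2 - G x ^ 2)),
        mul_nonneg hm0 (sq_nonneg (F x ^ 2 + G x ^ 2)),
        mul_nonneg (mul_nonneg hm0 hm0) (sq_nonneg (F x ^ 2 + G x ^ 2)),
        sq_nonneg (F x ^ 2 + G x ^ 2)]
    have key : (F x ^ 2 + G x ^ 2 + ((n:ℝ) - 3) * G x ^ 2) ^ 2 + (((n:ℝ) - 3) * F x * G x) ^ 2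
        ≤ 2 * ((n:ℝ) - 2) ^ 2 * (F x ^ 2 + G x ^ 2) ^ 2 := by nlinarith [h1, h2]
    have hPx : P x = (F x ^ 2 + G x ^ 2 + ((n:ℝ) - 3) * G x ^ 2) / (c * (F x ^ 2 + G x ^ 2)) := by
      simp only [hP]; field_simp
    have hQx : Q x = (((n:ℝ) - 3) * F x * G x) / (c * (F x ^ 2 + G x ^ 2)) := by
      simp only [hQ]; field_simp
    rw [hPx, hQx, hKsq, div_pow, div_pow, ← add_div]
    have hcq : (0:ℝ) < (c * (F x ^ 2 + G x ^ 2)) ^ 2 := by positivity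
    calc ((F x ^ 2 + G x ^ 2 + ((n:ℝ) - 3) * G x ^ 2) ^ 2 + (((n:ℝ) - 3) * F x * G x) ^ 2)
          / (c * (F x ^ 2 + G x ^ 2)) ^ 2
        ≤ (2 * ((n:ℝ) - 2) ^ 2 * (F x ^ 2 + G x ^ 2) ^ 2)
          / (c * (F x ^ 2 + G x ^ 2)) ^ 2 := by
          exact (div_le_div_iff_of_pos_right hcq).mpr key
      _ = 2 * ((n:ℝ) - 2) ^ 2 / c ^ 2 := by
          field_simp
  have key2 : ∀ δ : ℝ, 0 < δ → D s ≤ K ^ 2 * s ^ 2 + 2 * K * |s| * Real.sqrt δ := by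
    intro δ hδ
    set ψ : ℝ → ℝ := fun x => Real.sqrt (D x + δ) with hψ
    set ψ' : ℝ → ℝ := fun x =>
      1 / (2 * Real.sqrt (D x + δ)) * (2 * (F x - Fi x) * P x - 2 * (G x - Gi x) * Q x) with hψ'
    have hDδ : ∀ x, 0 < D x + δ := fun x => by linarith [hD0 x]
    have hψd : ∀ x, HasDerivAt ψ (ψ' x) x := by
      intro x
      rw [hψ, hψ']
      exact (Real.hasDerivAt_sqrt (hDδ x).ne').comp x ((hDd x).add_const δ)
    have hbound : ∀ x, ‖ψ' x‖ ≤ K := by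
      intro x
      have hS : 0 < Real.sqrt (D x + δ) := Real.sqrt_pos.2 (hDδ x)
      have hss : Real.sqrt (D x) ≤ Real.sqrt (D x + δ) := Real.sqrt_le_sqrt (by linarith)
      have hDb : |2 * (F x - Fi x) * P x - 2 * (G x - Gi x) * Q x|
          ≤ 2 * K * Real.sqrt (D x) := by
        have hRnn : 0 ≤ 2 * K * Real.sqrt (D x) :=
          mul_nonneg (by linarith) (Real.sqrt_nonneg _)
        have hCS : (2 * (F x - Fi x) * P x - 2 * (G x - Gi x) * Q x) ^ 2
            ≤ (2 * K * Real.sqrt (D x)) ^ 2 := by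
          have h1 : (2 * (F x - Fi x) * P x - 2 * (G x - Gi x) * Q x) ^ 2
              ≤ 4 * D x * (P x ^ 2 + Q x ^ 2) := by
            simp only [hD]
            nlinarith [sq_nonneg ((F x - Fi x) * Q x + (G x - Gi x) * P x)]
          have h2 : 4 * D x * (P x ^ 2 + Q x ^ 2) ≤ 4 * D x * K ^ 2 :=
            mul_le_mul_of_nonneg_left (hPQ x) (by linarith [hD0 x])
          have h3 : (2 * K * Real.sqrt (D x)) ^ 2 = 4 * D x * K ^ 2 := by
            rw [mul_pow, mul_pow, Real.sq_sqrt (hD0 x)]; ring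
          linarith
        calc |2 * (F x - Fi x) * P x - 2 * (G x - Gi x) * Q x|
            = Real.sqrt ((2 * (F x - Fi x) * P x - 2 * (G x - Gi x) * Q x) ^ 2) :=
              (Real.sqrt_sq_eq_abs _).symm
          _ ≤ Real.sqrt ((2 * K * Real.sqrt (D x)) ^ 2) := Real.sqrt_le_sqrt hCS
          _ = 2 * K * Real.sqrt (D x) := Real.sqrt_sq hRnn
      rw [Real.norm_eq_abs]
      simp only [hψ']
      rw [abs_mul, abs_of_pos (by positivity : (0:ℝ) < 1 / (2 * Real.sqrt (D x + δ)))]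
      rw [div_mul_eq_mul_div, one_mul, div_le_iff₀ (by positivity)]
      calc |2 * (F x - Fi x) * P x - 2 * (G x - Gi x) * Q x|
          ≤ 2 * K * Real.sqrt (D x) := hDb
        _ ≤ K * (2 * Real.sqrt (D x + δ)) := by nlinarith [hss, hK0, Real.sqrt_nonneg (D x)]
    have hmvt := Convex.norm_image_sub_le_of_norm_hasDerivWithin_le
      (fun x _ => (hψd x).hasDerivWithinAt) (fun x _ => hbound x) convex_univ
      (Set.mem_univ (0:ℝ)) (Set.mem_univ s)
    have hψ0 : ψ 0 = Real.sqrt δ := by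
      simp only [hψ, hD, hFi, hGi, hη]
      rw [intervalIntegral.integral_same]
      simp [hF0, hG0]
    have h5 : ψ s ≤ Real.sqrt δ + K * |s| := by
      rw [Real.norm_eq_abs, Real.norm_eq_abs, sub_zero, hψ0] at hmvt
      have := (abs_le.mp hmvt).2
      linarith
    have h6 : D s + δ ≤ (Real.sqrt δ + K * |s|) ^ 2 := by
      calc D s + δ = Real.sqrt (D s + δ) ^ 2 := (Real.sq_sqrt (hDδ s).le).symm
        _ ≤ (Real.sqrt δ + K * |s|) ^ 2 :=
            pow_le_pow_left₀ (Real.sqrt_nonneg _) h5 2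
    have h7 : Real.sqrt δ ^ 2 = δ := Real.sq_sqrt hδ.le
    nlinarith [h6, h7, sq_abs s]
  have main : D s ≤ K ^ 2 * s ^ 2 := by
    apply le_of_forall_pos_le_add
    intro ε hε
    have hKs : (0:ℝ) ≤ 2 * K * |s| := mul_nonneg (by linarith) (abs_nonneg s)
    have hT : (0:ℝ) < 2 * K * |s| + 1 := by linarith
    have hδpos : 0 < (ε / (2 * K * |s| + 1)) ^ 2 := by positivity
    have h8 := key2 _ hδpos
    rw [Real.sqrt_sq (by positivity)] at h8
    have h9 : 2 * K * |s| * (ε / (2 * K * |s| + 1)) ≤ ε := by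
      have hle : 2 * K * |s| / (2 * K * |s| + 1) ≤ 1 := by
        rw [div_le_one hT]; linarith
      calc 2 * K * |s| * (ε / (2 * K * |s| + 1))
          = (2 * K * |s| / (2 * K * |s| + 1)) * ε := by ring
        _ ≤ 1 * ε := mul_le_mul_of_nonneg_right hle hε.le
        _ = ε := one_mul ε
    exact h8.trans (add_le_add_right h9 _)
  have final : D s ≤ 2 * ((n:ℝ) - 2) ^ 2 * s ^ 2 / c ^ 2 := by
    calc D s ≤ K ^ 2 * s ^ 2 := main
      _ = 2 * ((n:ℝ) - 2) ^ 2 * s ^ 2 / c ^ 2 := by rw [hKsq]; ring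
  simpa only [hD, hFi, hGi, hη] using final
end

section
/- Let l, m ≥ 1 with l+m+2 = n, and let (x,y) be a unit-speed solution on an interval of l y'/x - m x'/y - (x''y' - x'y'') + (n-1)H(s) = 0 with x, y > 0, for continuous H. Then for s in this interval, y(s)^m x'(s) = (n-1)∫₀^s H(t) y(t)^m y'(t) dt + l ∫₀^s (y(t)^m/x(t)) y'(t)² dt + y(0)^m x'(0). -/
/-- First integral of the mean-curvature equation for generating curves of generalized
rotational hypersurfaces of `O(l+1)×O(m+1)`-type (`n = l+m+2`):
`y^m x' = (n-1)∫₀^s H y^m y' + l ∫₀^s (y^m/x) y'² + y(0)^m x'(0)`. -/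
theorem stmt_10 (l m : ℕ) (hl : 1 ≤ l) (hm : 1 ≤ m) (b : ℝ) (hb : 0 < b)
    (H x y x' y' x'' y'' : ℝ → ℝ)
    (hx : ∀ s ∈ Set.Ico (0:ℝ) b, HasDerivWithinAt x (x' s) (Set.Ico 0 b) s)
    (hy : ∀ s ∈ Set.Ico (0:ℝ) b, HasDerivWithinAt y (y' s) (Set.Ico 0 b) s)
    (hx' : ∀ s ∈ Set.Ico (0:ℝ) b, HasDerivWithinAt x' (x'' s) (Set.Ico 0 b) s)
    (hy' : ∀ s ∈ Set.Ico (0:ℝ) b, HasDerivWithinAt y' (y'' s) (Set.Ico 0 b) s)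
    (hHc : ContinuousOn H (Set.Ico 0 b))
    (hxpos : ∀ s ∈ Set.Ico (0:ℝ) b, 0 < x s)
    (hypos : ∀ s ∈ Set.Ico (0:ℝ) b, 0 < y s)
    (hunit : ∀ s ∈ Set.Ico (0:ℝ) b, x' s ^ 2 + y' s ^ 2 = 1)
    (heq : ∀ s ∈ Set.Ico (0:ℝ) b,
      (l:ℝ) * y' s / x s - (m:ℝ) * x' s / y s - (x'' s * y' s - x' s * y'' s)
        + ((l:ℝ) + (m:ℝ) + 1) * H s = 0) :
    ∀ s ∈ Set.Ico (0:ℝ) b,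
      y s ^ m * x' s
        = ((l:ℝ) + (m:ℝ) + 1) * (∫ t in (0:ℝ)..s, H t * y t ^ m * y' t)
          + (l:ℝ) * (∫ t in (0:ℝ)..s, (y t ^ m / x t) * y' t ^ 2)
          + y 0 ^ m * x' 0 := by
  obtain ⟨k, rfl⟩ : ∃ k, m = k + 1 := ⟨m - 1, (Nat.succ_pred_eq_of_pos hm).symm⟩
  set c : ℝ := (l:ℝ) + (↑(k+1):ℝ) + 1 with hc
  have hcy : ContinuousOn y (Set.Ico 0 b) := fun t ht => (hy t ht).continuousWithinAt
  have hcx : ContinuousOn x (Set.Ico 0 b) := fun t ht => (hx t ht).continuousWithinAt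
  have hcy' : ContinuousOn y' (Set.Ico 0 b) := fun t ht => (hy' t ht).continuousWithinAt
  set g1 : ℝ → ℝ := fun t => H t * y t ^ (k+1) * y' t with hg1
  set g2 : ℝ → ℝ := fun t => (y t ^ (k+1) / x t) * y' t ^ 2 with hg2
  have hcg1 : ContinuousOn g1 (Set.Ico 0 b) := (hHc.mul (hcy.pow _)).mul hcy'
  have hcg2 : ContinuousOn g2 (Set.Ico 0 b) :=
    (((hcy.pow _).div hcx (fun t ht => (hxpos t ht).ne')).mul (hcy'.pow 2))
  -- derivative of the unit-speed constraint
  have hD : ∀ t ∈ Set.Ico (0:ℝ) b, x' t * x'' t + y' t * y'' t = 0 := by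
    intro t ht
    have h1 : HasDerivWithinAt (fun u => x' u ^ 2 + y' u ^ 2)
        (2 * x' t ^ 1 * x'' t + 2 * y' t ^ 1 * y'' t) (Set.Ico 0 b) t :=
      (((hx' t ht).pow 2)).add ((hy' t ht).pow 2)
    have h2 : HasDerivWithinAt (fun u => x' u ^ 2 + y' u ^ 2) 0 (Set.Ico 0 b) t :=
      (hasDerivWithinAt_const t _ (1:ℝ)).congr (fun u hu => hunit u hu) (hunit t ht)
    have hu := uniqueDiffOn_Ico 0 b t ht
    have := h1.derivWithin hu ▸ h2.derivWithin hu
    have h3 : 2 * x' t ^ 1 * x'' t + 2 * y' t ^ 1 * y'' t = 0 := by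
      rw [← h1.derivWithin hu, h2.derivWithin hu]
    nlinarith [h3]
  -- derivative of F = y^m x'
  have hF : ∀ t ∈ Set.Ico (0:ℝ) b,
      HasDerivWithinAt (fun u => y u ^ (k+1) * x' u) (c * g1 t + (l:ℝ) * g2 t)
        (Set.Ico 0 b) t := by
    intro t ht
    have h1 : HasDerivWithinAt (fun u => y u ^ (k+1) * x' u)
        (((k+1:ℕ) : ℝ) * y t ^ k * y' t * x' t + y t ^ (k+1) * x'' t) (Set.Ico 0 b) t := by
      have := ((hy t ht).pow (k+1)).mul (hx' t ht)
      exact this.congr_deriv (by simp)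
    convert h1 using 1
    have hE := heq t ht
    have hU := hunit t ht
    have hDt := hD t ht
    have hx0 : x t ≠ 0 := (hxpos t ht).ne'
    have hy0 : y t ≠ 0 := (hypos t ht).ne'
    simp only [hg1, hg2, hc]
    field_simp
    push_cast
    push_cast at hE
    field_simp at hE
    push_cast at hU hDt
    linear_combination (y' t * y t ^ k) * hE + (x t * y t ^ (k+1) * x'' t) * hU
      - (x t * y t ^ (k+1) * x' t) * hDt
      - (H t * y t ^ (k+1) * y' t * x t) * (Nat.cast_add_one (R := ℝ) k)
  intro s hs
  rcases eq_or_lt_of_le hs.1 with h0 | h0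
  · simp [← h0]
  · have hIcc : Set.Icc (0:ℝ) s ⊆ Set.Ico 0 b :=
      fun t ht => ⟨ht.1, lt_of_le_of_lt ht.2 hs.2⟩
    have hcont : ContinuousOn (fun u => y u ^ (k+1) * x' u) (Set.Icc 0 s) :=
      fun t ht => ((hF t (hIcc ht)).continuousWithinAt).mono hIcc
    have hderiv : ∀ t ∈ Set.Ioo (0:ℝ) s,
        HasDerivAt (fun u => y u ^ (k+1) * x' u) (c * g1 t + (l:ℝ) * g2 t) t := by
      intro t ht
      have hmem : Set.Ico (0:ℝ) b ∈ nhds t :=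
        Ico_mem_nhds ht.1 (lt_trans ht.2 hs.2)
      exact (hF t ⟨ht.1.le, lt_trans ht.2 hs.2⟩).hasDerivAt hmem
    have h1int : IntervalIntegrable g1 MeasureTheory.volume 0 s :=
      (hcg1.mono hIcc).intervalIntegrable_of_Icc hs.1
    have h2int : IntervalIntegrable g2 MeasureTheory.volume 0 s :=
      (hcg2.mono hIcc).intervalIntegrable_of_Icc hs.1
    have hint : IntervalIntegrable (fun t => c * g1 t + (l:ℝ) * g2 t)
        MeasureTheory.volume 0 s := (h1int.const_mul c).add (h2int.const_mul _)
    have hFTC := intervalIntegral.integral_eq_sub_of_hasDerivAt_of_le hs.1 hcont hderiv hint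
    rw [intervalIntegral.integral_add (h1int.const_mul c) (h2int.const_mul _),
      intervalIntegral.integral_const_mul, intervalIntegral.integral_const_mul] at hFTC
    linarith [hFTC]
end

section
/- Let l, m ≥ 1, n = l+m+2, H continuous, and let (x,y) be a unit-speed solution of l y'/x - m x'/y - (x''y' - x'y'') + (n-1)H = 0 with x,y > 0 on [0,b), such that y(s) → 0 and x(s) → x_b > 0 as s → b. Then x'(s) → 0 as s → b. -/
open Set Filter Topology

set_option maxHeartbeats 1000000 in
/-- If the generating curve of an `O(l+1)×O(m+1)`-type hypersurface reaches the `x`-axis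
away from the origin (`y → 0`, `x → x_b > 0` as `s → b`), then `x'(s) → 0`. -/
theorem stmt_11 (l m : ℕ) (hl : 1 ≤ l) (hm : 1 ≤ m) (b : ℝ) (hb : 0 < b)
    (H x y x' y' x'' y'' : ℝ → ℝ) (xb : ℝ) (hxb : 0 < xb)
    (hx : ∀ s ∈ Set.Ico (0:ℝ) b, HasDerivWithinAt x (x' s) (Set.Ico 0 b) s)
    (hy : ∀ s ∈ Set.Ico (0:ℝ) b, HasDerivWithinAt y (y' s) (Set.Ico 0 b) s)
    (hx' : ∀ s ∈ Set.Ico (0:ℝ) b, HasDerivWithinAt x' (x'' s) (Set.Ico 0 b) s)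
    (hy' : ∀ s ∈ Set.Ico (0:ℝ) b, HasDerivWithinAt y' (y'' s) (Set.Ico 0 b) s)
    (hHc : ContinuousOn H (Set.Icc 0 b))
    (hxpos : ∀ s ∈ Set.Ico (0:ℝ) b, 0 < x s)
    (hypos : ∀ s ∈ Set.Ico (0:ℝ) b, 0 < y s)
    (hunit : ∀ s ∈ Set.Ico (0:ℝ) b, x' s ^ 2 + y' s ^ 2 = 1)
    (heq : ∀ s ∈ Set.Ico (0:ℝ) b,
      (l:ℝ) * y' s / x s - (m:ℝ) * x' s / y s - (x'' s * y' s - x' s * y'' s)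
        + ((l:ℝ) + (m:ℝ) + 1) * H s = 0)
    (hylim : Filter.Tendsto y (nhdsWithin b (Set.Iio b)) (nhds 0))
    (hxlim : Filter.Tendsto x (nhdsWithin b (Set.Iio b)) (nhds xb)) :
    Filter.Tendsto x' (nhdsWithin b (Set.Iio b)) (nhds 0) := by
  set I : Set ℝ := Set.Ico (0:ℝ) b with hI
  set n1 : ℝ := (l:ℝ) + (m:ℝ) + 1 with hn1
  have hn1pos : 0 < n1 := by positivity
  have hUD : UniqueDiffOn ℝ I := uniqueDiffOn_Ico 0 b
  -- orthogonality: x'x'' + y'y'' = 0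
  have orth : ∀ s ∈ I, x' s * x'' s + y' s * y'' s = 0 := by
    intro s hs
    have h1 : HasDerivWithinAt (fun t => x' t ^ 2 + y' t ^ 2)
        ((2:ℝ) * x' s ^ (2-1) * x'' s + (2:ℝ) * y' s ^ (2-1) * y'' s) I s :=
      ((hx' s hs).pow 2).add ((hy' s hs).pow 2)
    have h2 : HasDerivWithinAt (fun _ : ℝ => (1:ℝ))
        ((2:ℝ) * x' s ^ (2-1) * x'' s + (2:ℝ) * y' s ^ (2-1) * y'' s) I s :=
      h1.congr (fun t ht => (hunit t ht).symm) (hunit s hs).symm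
    have e1 := h2.derivWithin (hUD s hs)
    have e2 := (hasDerivWithinAt_const s I (1:ℝ)).derivWithin (hUD s hs)
    have e3 : (2:ℝ) * x' s ^ (2-1) * x'' s + (2:ℝ) * y' s ^ (2-1) * y'' s = 0 :=
      e1.symm.trans e2
    norm_num at e3
    linarith
  have hE : ∀ s ∈ I, x'' s * y' s - x' s * y'' s
      = (l:ℝ) * y' s / x s - (m:ℝ) * x' s / y s + n1 * H s := by
    intro s hs; have := heq s hs; rw [hn1]; linarith
  have hx''E : ∀ s ∈ I, x'' s
      = y' s * ((l:ℝ) * y' s / x s - (m:ℝ) * x' s / y s + n1 * H s) := by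
    intro s hs
    rw [← hE s hs]
    linear_combination x' s * orth s hs - x'' s * hunit s hs
  have hy''E : ∀ s ∈ I, y'' s
      = - x' s * ((l:ℝ) * y' s / x s - (m:ℝ) * x' s / y s + n1 * H s) := by
    intro s hs
    rw [← hE s hs]
    linear_combination y' s * orth s hs - y'' s * hunit s hs
  -- the function F = y^m x'
  set F : ℝ → ℝ := fun t => y t ^ m * x' t with hFdef
  set D : ℝ → ℝ := fun t => ((m:ℝ) * y t ^ (m-1) * y' t) * x' t + y t ^ m * x'' t with hDdef
  have hFD : ∀ s ∈ I, HasDerivWithinAt F (D s) I s := fun s hs =>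
    ((hy s hs).pow m).mul (hx' s hs)
  have hDform : ∀ s ∈ I, D s = y s ^ m * y' s * ((l:ℝ) * y' s / x s + n1 * H s) := by
    intro s hs
    have hxne : x s ≠ 0 := (hxpos s hs).ne'
    have hyne : y s ≠ 0 := (hypos s hs).ne'
    have hm1 : y s ^ (m-1) * y s = y s ^ m := by
      rw [← pow_succ]; congr 1; omega
    rw [hDdef]
    simp only
    rw [hx''E s hs, ← hm1]
    field_simp
    ring
  -- bounds on x', y'
  have hx'le : ∀ s ∈ I, |x' s| ≤ 1 := by
    intro s hs
    have h := hunit s hs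
    rw [abs_le]
    constructor <;> nlinarith [sq_nonneg (y' s)]
  have hy'le : ∀ s ∈ I, |y' s| ≤ 1 := by
    intro s hs
    have h := hunit s hs
    rw [abs_le]
    constructor <;> nlinarith [sq_nonneg (x' s)]
  -- bound on H
  obtain ⟨M, hM⟩ : ∃ M, ∀ s ∈ Set.Icc (0:ℝ) b, |H s| ≤ M := by
    obtain ⟨M, hM⟩ := isCompact_Icc.exists_bound_of_continuousOn hHc
    exact ⟨M, fun s hs => by simpa using hM s hs⟩
  have hM0 : 0 ≤ M := le_trans (abs_nonneg _) (hM 0 ⟨le_refl _, hb.le⟩)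
  -- choose a' < b such that on (a', b): x > xb/2 and y < δ
  set δ : ℝ := (m:ℝ) / (n1 * M + 1) with hδ
  have hδpos : 0 < δ := by
    apply div_pos
    · exact_mod_cast Nat.cast_pos.mpr hm
    · positivity
  have hev : ∀ᶠ s in 𝓝[<] b, xb/2 < x s ∧ y s < δ :=
    (hxlim.eventually_const_lt (half_lt_self hxb)).and (hylim.eventually_lt_const hδpos)
  obtain ⟨a, ha, hsub⟩ := (mem_nhdsLT_iff_exists_Ioo_subset' (show b - 1 < b by linarith)).mp hev
  set a' : ℝ := max a (b/2) with ha'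
  have ha'b : a' < b := max_lt ha (half_lt_self hb)
  have ha'0 : 0 < a' := lt_of_lt_of_le (half_pos hb) (le_max_right _ _)
  have hprop : ∀ u ∈ Set.Ioo a' b, xb/2 < x u ∧ y u < δ := fun u hu =>
    hsub ⟨lt_of_le_of_lt (le_max_left a (b/2)) hu.1, hu.2⟩
  have hII : Set.Ioo a' b ⊆ I := fun u hu => ⟨(ha'0.trans hu.1).le, hu.2⟩
  -- continuity of y'
  have hy'c : ContinuousOn y' I := fun u hu => (hy' u hu).continuousWithinAt
  -- y'' is positive at critical points of y in (a', b)
  have hy''crit : ∀ t₀ ∈ Set.Ioo a' b, y' t₀ = 0 → 0 < y'' t₀ := by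
    intro t₀ ht₀ hy'0
    have ht₀I : t₀ ∈ I := hII ht₀
    have hx'sq : x' t₀ ^ 2 = 1 := by
      have := hunit t₀ ht₀I; rw [hy'0] at this; nlinarith
    have hytpos : 0 < y t₀ := hypos t₀ ht₀I
    have hyδ : y t₀ < δ := (hprop t₀ ht₀).2
    have hform := hy''E t₀ ht₀I
    rw [hy'0] at hform
    have hyH : |H t₀| ≤ M := hM t₀ ⟨ht₀I.1, ht₀I.2.le⟩
    have hx'b : |x' t₀| ≤ 1 := hx'le t₀ ht₀I
    -- y'' t₀ = m x'²/y - x' n1 H = m / y - x' n1 H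
    have hyne : y t₀ ≠ 0 := hytpos.ne'
    have h5 : (m:ℝ) * x' t₀ / y t₀ * y t₀ = (m:ℝ) * x' t₀ := div_mul_cancel₀ _ hyne
    have key : y'' t₀ * y t₀ = (m:ℝ) - x' t₀ * (n1 * H t₀) * y t₀ := by
      rw [hform]
      have hz : (l:ℝ) * 0 / x t₀ = 0 := by simp
      rw [hz]
      linear_combination x' t₀ * h5 + (m:ℝ) * hx'sq
    have hb1 : x' t₀ * H t₀ ≤ M := by
      calc x' t₀ * H t₀ ≤ |x' t₀ * H t₀| := le_abs_self _
        _ = |x' t₀| * |H t₀| := abs_mul _ _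
        _ ≤ 1 * M := mul_le_mul hx'b hyH (abs_nonneg _) zero_le_one
        _ = M := one_mul M
    have hyδ' : y t₀ * (n1 * M + 1) < (m:ℝ) := by
      have hpos : (0:ℝ) < n1 * M + 1 := by positivity
      calc y t₀ * (n1 * M + 1) < δ * (n1 * M + 1) := by
            exact mul_lt_mul_of_pos_right hyδ hpos
        _ = (m:ℝ) := by rw [hδ]; field_simp
    have h7 : x' t₀ * H t₀ * y t₀ ≤ M * y t₀ := mul_le_mul_of_nonneg_right hb1 hytpos.le
    have h8 : n1 * (x' t₀ * H t₀ * y t₀) ≤ n1 * (M * y t₀) := mul_le_mul_of_nonneg_left h7 hn1pos.le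
    have hyy : 0 < y'' t₀ * y t₀ := by rw [key]; nlinarith [h8, hyδ', hytpos]
    nlinarith [hyy, hytpos]
  -- y' < 0 on (a', b)
  have hy'neg : ∀ s ∈ Set.Ioo a' b, y' s < 0 := by
    by_contra hcon
    push_neg at hcon
    obtain ⟨s₀, hs₀, hy0⟩ := hcon
    have hs₀I : s₀ ∈ I := hII hs₀
    -- y' ≥ 0 on [s₀, b)
    have step1 : ∀ t ∈ Set.Ico s₀ b, 0 ≤ y' t := by
      by_contra hc2
      push_neg at hc2
      obtain ⟨t₁, ht₁, hyt₁⟩ := hc2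
      have hs₀t₁ : s₀ ≤ t₁ := ht₁.1
      have hIccI : Set.Icc s₀ t₁ ⊆ I := fun u hu =>
        ⟨hs₀I.1.trans hu.1, lt_of_le_of_lt hu.2 ht₁.2⟩
      set T : Set ℝ := Set.Icc s₀ t₁ ∩ y' ⁻¹' Set.Ici 0 with hT
      have hTclosed : IsClosed T :=
        (hy'c.mono hIccI).preimage_isClosed_of_isClosed isClosed_Icc isClosed_Ici
      have hTne : T.Nonempty := ⟨s₀, ⟨le_refl _, hs₀t₁⟩, hy0⟩
      have hTbdd : BddAbove T := (bddAbove_Icc).mono Set.inter_subset_left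
      set t₀ : ℝ := sSup T with ht₀def
      have ht₀T : t₀ ∈ T := hTclosed.csSup_mem hTne hTbdd
      have ht₀mem : t₀ ∈ Set.Icc s₀ t₁ := ht₀T.1
      have hy't₀ : 0 ≤ y' t₀ := ht₀T.2
      have ht₀I : t₀ ∈ I := hIccI ht₀mem
      have hlt : t₀ < t₁ := lt_of_le_of_ne ht₀mem.2 (by
        intro h
        rw [h] at hy't₀
        exact absurd hy't₀ (not_le.mpr hyt₁))
      have hneg : ∀ u ∈ Set.Ioc t₀ t₁, y' u < 0 := by
        intro u hu
        by_contra h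
        push_neg at h
        have huT : u ∈ T := ⟨⟨ht₀mem.1.trans hu.1.le, hu.2⟩, h⟩
        exact absurd (le_csSup hTbdd huT) (not_le.mpr hu.1)
      have hy't₀0 : y' t₀ = 0 := by
        rcases eq_or_lt_of_le hy't₀ with h | h
        · exact h.symm
        exfalso
        have hc : Filter.Tendsto y' (𝓝[I] t₀) (𝓝 (y' t₀)) :=
          (hy' t₀ ht₀I).continuousWithinAt
        have hev1 : ∀ᶠ u in 𝓝[I] t₀, 0 < y' u := hc.eventually_const_lt h
        have hsubset : Set.Ioc t₀ t₁ ⊆ I := fun u hu =>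
          ⟨ht₀I.1.trans hu.1.le, lt_of_le_of_lt hu.2 ht₁.2⟩
        have hev2 : ∀ᶠ u in 𝓝[Set.Ioc t₀ t₁] t₀, 0 < y' u :=
          hev1.filter_mono (nhdsWithin_mono _ hsubset)
        have hne : (𝓝[Set.Ioc t₀ t₁] t₀).NeBot := by
          apply mem_closure_iff_nhdsWithin_neBot.mp
          rw [closure_Ioc hlt.ne]
          exact ⟨le_refl _, hlt.le⟩
        obtain ⟨u, hu1, hu2⟩ := (hev2.and (eventually_mem_nhdsWithin)).exists
        exact absurd hu1 (not_lt.mpr (hneg u hu2).le)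
      have ht₀Ioo : t₀ ∈ Set.Ioo a' b :=
        ⟨lt_of_lt_of_le hs₀.1 ht₀mem.1, lt_of_le_of_lt ht₀mem.2 ht₁.2⟩
      have hy''pos : 0 < y'' t₀ := hy''crit t₀ ht₀Ioo hy't₀0
      -- slope argument: y'' t₀ ≤ 0
      have hslope : Filter.Tendsto (slope y' t₀) (𝓝[Set.Ioo t₀ t₁] t₀) (𝓝 (y'' t₀)) := by
        have h1 := hasDerivWithinAt_iff_tendsto_slope.mp (hy' t₀ ht₀I)
        apply h1.mono_left
        apply nhdsWithin_mono
        intro u hu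
        exact ⟨⟨ht₀I.1.trans hu.1.le, lt_trans hu.2 ht₁.2⟩, (ne_of_gt hu.1)⟩
      have hne : (𝓝[Set.Ioo t₀ t₁] t₀).NeBot := by
        apply mem_closure_iff_nhdsWithin_neBot.mp
        rw [closure_Ioo hlt.ne]
        exact ⟨le_refl _, hlt.le⟩
      have hle : y'' t₀ ≤ 0 := by
        apply le_of_tendsto hslope
        filter_upwards [eventually_mem_nhdsWithin] with u hu
        have hslval : slope y' t₀ u = (y' u - y' t₀) / (u - t₀) := slope_def_field y' t₀ u
        rw [hslval, hy't₀0, sub_zero]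
        apply div_nonpos_of_nonpos_of_nonneg
        · exact (hneg u ⟨hu.1, hu.2.le⟩).le
        · linarith [hu.1]
      linarith
    -- y is monotone on [s₀, b); contradiction with y → 0
    have mono : ∀ t ∈ Set.Ico s₀ b, y s₀ ≤ y t := by
      intro t ht
      rcases eq_or_lt_of_le ht.1 with h | hlt
      · rw [← h]
      have hmono : MonotoneOn y (Set.Icc s₀ t) := by
        apply monotoneOn_of_deriv_nonneg (convex_Icc s₀ t)
        · apply ContinuousOn.mono (fun u hu => (hy u hu).continuousWithinAt)
          intro u hu
          exact ⟨hs₀I.1.trans hu.1, lt_of_le_of_lt hu.2 ht.2⟩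
        · intro u hu
          rw [interior_Icc] at hu
          have huI : u ∈ I := ⟨hs₀I.1.trans hu.1.le, lt_trans hu.2 ht.2⟩
          have hnb : I ∈ 𝓝 u := by
            rw [hI]
            apply Ico_mem_nhds (lt_of_lt_of_le (ha'0.trans hs₀.1) hu.1.le) huI.2
          exact ((hy u huI).hasDerivAt hnb).differentiableAt.differentiableWithinAt
        · intro u hu
          rw [interior_Icc] at hu
          have huI : u ∈ I := ⟨hs₀I.1.trans hu.1.le, lt_trans hu.2 ht.2⟩
          have hnb : I ∈ 𝓝 u := by
            rw [hI]
            apply Ico_mem_nhds (lt_of_lt_of_le (ha'0.trans hs₀.1) hu.1.le) huI.2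
          rw [((hy u huI).hasDerivAt hnb).deriv]
          exact step1 u ⟨hu.1.le, huI.2⟩
      exact hmono (Set.left_mem_Icc.mpr ht.1) (Set.right_mem_Icc.mpr ht.1) ht.1
    have hcontra : y s₀ ≤ 0 := by
      apply ge_of_tendsto hylim
      filter_upwards [Ioo_mem_nhdsLT hs₀.2] with t ht
      exact mono t ⟨ht.1.le, ht.2⟩
    exact absurd hcontra (not_le.mpr (hypos s₀ hs₀I))
  -- y is antitone: for s ≤ t in (a', b), y t ≤ y s
  have hanti : ∀ s ∈ Set.Ioo a' b, ∀ t ∈ Set.Ico s b, y t ≤ y s := by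
    intro s hs t ht
    rcases eq_or_lt_of_le ht.1 with h | hlt
    · rw [← h]
    have hmono : AntitoneOn y (Set.Icc s t) := by
      apply antitoneOn_of_deriv_nonpos (convex_Icc s t)
      · apply ContinuousOn.mono (fun u hu => (hy u hu).continuousWithinAt)
        intro u hu
        exact ⟨(ha'0.trans hs.1).le.trans hu.1, lt_of_le_of_lt hu.2 ht.2⟩
      · intro u hu
        rw [interior_Icc] at hu
        have huI : u ∈ I := ⟨(ha'0.trans hs.1).le.trans hu.1.le, lt_trans hu.2 ht.2⟩
        have hnb : I ∈ 𝓝 u := by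
          rw [hI]
          apply Ico_mem_nhds (lt_of_lt_of_le (ha'0.trans hs.1) hu.1.le) huI.2
        exact ((hy u huI).hasDerivAt hnb).differentiableAt.differentiableWithinAt
      · intro u hu
        rw [interior_Icc] at hu
        have huI : u ∈ I := ⟨(ha'0.trans hs.1).le.trans hu.1.le, lt_trans hu.2 ht.2⟩
        have hnb : I ∈ 𝓝 u := by
          rw [hI]
          apply Ico_mem_nhds (lt_of_lt_of_le (ha'0.trans hs.1) hu.1.le) huI.2
        rw [((hy u huI).hasDerivAt hnb).deriv]
        exact (hy'neg u ⟨hs.1.trans hu.1, lt_trans hu.2 ht.2⟩).le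
    exact hmono (Set.left_mem_Icc.mpr ht.1) (Set.right_mem_Icc.mpr ht.1) ht.1
  -- bound on D
  set C : ℝ := (l:ℝ) * (2/xb) + n1 * M with hC
  have hC0 : 0 ≤ C := by positivity
  have hDb : ∀ σ ∈ Set.Ioo a' b, |D σ| ≤ C * y σ ^ m := by
    intro σ hσ
    have hσI : σ ∈ I := hII hσ
    rw [hDform σ hσI]
    have hypos' : 0 < y σ := hypos σ hσI
    have h2 : |y' σ| ≤ 1 := hy'le σ hσI
    have hxσ : xb/2 < x σ := (hprop σ hσ).1
    have h3 : |(l:ℝ) * y' σ / x σ| ≤ (l:ℝ) * (2/xb) := by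
      rw [abs_div, abs_mul, Nat.abs_cast, abs_of_pos (hxpos σ hσI)]
      calc (l:ℝ) * |y' σ| / x σ ≤ (l:ℝ) * 1 / (xb/2) := by
            apply div_le_div₀ (by positivity)
              (mul_le_mul_of_nonneg_left h2 (Nat.cast_nonneg l)) (half_pos hxb) hxσ.le
        _ = (l:ℝ) * (2/xb) := by
            rw [mul_one, div_div_eq_mul_div, mul_div_assoc]
    have h4 : |n1 * H σ| ≤ n1 * M := by
      rw [abs_mul, abs_of_pos hn1pos]
      exact mul_le_mul_of_nonneg_left (hM σ ⟨hσI.1, hσI.2.le⟩) hn1pos.le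
    calc |y σ ^ m * y' σ * ((l:ℝ) * y' σ / x σ + n1 * H σ)|
        = |y σ ^ m| * |y' σ| * |(l:ℝ) * y' σ / x σ + n1 * H σ| := by
          rw [abs_mul, abs_mul]
      _ ≤ y σ ^ m * 1 * C := by
          rw [abs_of_nonneg (pow_nonneg hypos'.le m)]
          apply mul_le_mul (mul_le_mul_of_nonneg_left h2 (by positivity)) _ (abs_nonneg _)
            (by positivity)
          exact (abs_add_le _ _).trans (add_le_add h3 h4)
      _ = C * y σ ^ m := by ring
  -- F tends to 0
  have hympos : ∀ s ∈ I, 0 < y s ^ m := fun s hs => pow_pos (hypos s hs) m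
  have hFlim : Filter.Tendsto F (𝓝[<] b) (𝓝 0) := by
    apply squeeze_zero_norm' (a := fun t => y t ^ m)
    · filter_upwards [Ioo_mem_nhdsLT hb] with t ht
      have htI : t ∈ I := ⟨ht.1.le, ht.2⟩
      rw [hFdef]
      simp only [Real.norm_eq_abs, abs_mul, abs_of_nonneg (pow_nonneg (hypos t htI).le m)]
      calc y t ^ m * |x' t| ≤ y t ^ m * 1 :=
            mul_le_mul_of_nonneg_left (hx'le t htI) (pow_nonneg (hypos t htI).le m)
        _ = y t ^ m := mul_one _
    · have := hylim.pow m
      rwa [zero_pow (by omega : m ≠ 0)] at this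
  -- |F s| ≤ C * y s ^ m * (b - s) on (a', b)
  have hFbound : ∀ s ∈ Set.Ioo a' b, |x' s| ≤ C * (b - s) := by
    intro s hs
    have hsI : s ∈ I := hII hs
    have key : ∀ t ∈ Set.Ico s b, |F t - F s| ≤ (C * y s ^ m) * (t - s) := by
      intro t ht
      have hIccsub : Set.Icc s t ⊆ Set.Ioo a' b := fun u hu =>
        ⟨lt_of_lt_of_le hs.1 hu.1, lt_of_le_of_lt hu.2 ht.2⟩
      have hIccI : Set.Icc s t ⊆ I := fun u hu => hII (hIccsub hu)
      have hmvt := (convex_Icc s t).norm_image_sub_le_of_norm_hasDerivWithin_le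
        (f := F) (f' := D) (C := C * y s ^ m)
        (fun u hu => (hFD u (hIccI hu)).mono hIccI)
        (fun u hu => by
          have h1 := hDb u (hIccsub hu)
          have h2 : y u ≤ y s := hanti s hs u ⟨hu.1, lt_of_le_of_lt hu.2 ht.2⟩
          have h3 : y u ^ m ≤ y s ^ m :=
            pow_le_pow_left₀ (hypos u (hIccI hu)).le h2 m
          calc ‖D u‖ = |D u| := rfl
            _ ≤ C * y u ^ m := h1
            _ ≤ C * y s ^ m := mul_le_mul_of_nonneg_left h3 hC0)
        (Set.left_mem_Icc.mpr ht.1) (Set.right_mem_Icc.mpr ht.1)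
      rw [Real.norm_eq_abs, Real.norm_eq_abs, abs_of_nonneg (sub_nonneg.mpr ht.1)] at hmvt
      exact hmvt
    have hFs : |F s| ≤ (C * y s ^ m) * (b - s) := by
      have hlim2 : Filter.Tendsto (fun t => |F t - F s|) (𝓝[<] b) (𝓝 |0 - F s|) :=
        ((hFlim.sub tendsto_const_nhds).abs)
      rw [zero_sub, abs_neg] at hlim2
      apply le_of_tendsto hlim2
      filter_upwards [Ioo_mem_nhdsLT hs.2] with t ht
      calc |F t - F s| ≤ (C * y s ^ m) * (t - s) := key t ⟨ht.1.le, ht.2⟩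
        _ ≤ (C * y s ^ m) * (b - s) := by
            apply mul_le_mul_of_nonneg_left _
              (mul_nonneg hC0 (pow_nonneg (hypos s hsI).le m))
            linarith [ht.2]
    have hympos' : 0 < y s ^ m := hympos s hsI
    have hFabs : |F s| = y s ^ m * |x' s| := by
      rw [hFdef]
      simp only [abs_mul, abs_of_nonneg (pow_nonneg (hypos s hsI).le m)]
    rw [hFabs] at hFs
    have : y s ^ m * |x' s| ≤ y s ^ m * (C * (b - s)) := by
      calc y s ^ m * |x' s| ≤ (C * y s ^ m) * (b - s) := hFs
        _ = y s ^ m * (C * (b - s)) := by ring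
    exact le_of_mul_le_mul_left this hympos'
  -- conclude
  apply squeeze_zero_norm' (a := fun s => C * (b - s))
  · filter_upwards [Ioo_mem_nhdsLT ha'b] with s hs
    exact hFbound s hs
  · have h1 : Filter.Tendsto (fun s : ℝ => C * (b - s)) (𝓝 b) (𝓝 (C * (b - b))) :=
      tendsto_const_nhds.mul (tendsto_const_nhds.sub tendsto_id)
    rw [sub_self, mul_zero] at h1
    exact h1.mono_left nhdsWithin_le_nhds
end

section
/- Let l, m ≥ 1, n = l+m+2, H continuous, and let (x,y) be a unit-speed solution of l y'/x - m x'/y - (x''y' - x'y'') + (n-1)H = 0 with x,y > 0 on an interval with endpoint b, such that y(s) → 0 as s → b and x(s) → x_b > 0. Then y'(s) ≠ 0 for all s in some neighborhood of b (intersected with the domain). -/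
/-- If the generating curve of an `O(l+1)×O(m+1)`-type hypersurface reaches the `x`-axis
away from the origin (`y → 0`, `x → x_b > 0` as `s → b`), then `y'` does not vanish in a
neighborhood of `b`. -/
theorem stmt_12 (l m : ℕ) (hl : 1 ≤ l) (hm : 1 ≤ m) (b : ℝ) (hb : 0 < b)
    (H x y x' y' x'' y'' : ℝ → ℝ) (xb : ℝ) (hxb : 0 < xb)
    (hx : ∀ s ∈ Set.Ico (0:ℝ) b, HasDerivWithinAt x (x' s) (Set.Ico 0 b) s)
    (hy : ∀ s ∈ Set.Ico (0:ℝ) b, HasDerivWithinAt y (y' s) (Set.Ico 0 b) s)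
    (hx' : ∀ s ∈ Set.Ico (0:ℝ) b, HasDerivWithinAt x' (x'' s) (Set.Ico 0 b) s)
    (hy' : ∀ s ∈ Set.Ico (0:ℝ) b, HasDerivWithinAt y' (y'' s) (Set.Ico 0 b) s)
    (hHc : ContinuousOn H (Set.Icc 0 b))
    (hxpos : ∀ s ∈ Set.Ico (0:ℝ) b, 0 < x s)
    (hypos : ∀ s ∈ Set.Ico (0:ℝ) b, 0 < y s)
    (hunit : ∀ s ∈ Set.Ico (0:ℝ) b, x' s ^ 2 + y' s ^ 2 = 1)
    (heq : ∀ s ∈ Set.Ico (0:ℝ) b,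
      (l:ℝ) * y' s / x s - (m:ℝ) * x' s / y s - (x'' s * y' s - x' s * y'' s)
        + ((l:ℝ) + (m:ℝ) + 1) * H s = 0)
    (hylim : Filter.Tendsto y (nhdsWithin b (Set.Iio b)) (nhds 0))
    (hxlim : Filter.Tendsto x (nhdsWithin b (Set.Iio b)) (nhds xb)) :
    ∀ᶠ s in nhdsWithin b (Set.Iio b), y' s ≠ 0 := by
  by_contra hcon
  rw [Filter.not_eventually] at hcon
  simp only [not_ne_iff] at hcon
  -- bound for H
  obtain ⟨C, hC⟩ : ∃ C, ∀ s ∈ Set.Icc (0:ℝ) b, |H s| ≤ C := by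
    obtain ⟨C, hC⟩ := isCompact_Icc.exists_bound_of_continuousOn hHc
    exact ⟨C, fun s hs => by simpa using hC s hs⟩
  have hC0 : 0 ≤ C := le_trans (abs_nonneg _) (hC 0 ⟨le_rfl, hb.le⟩)
  set K : ℝ := (l:ℝ) + (m:ℝ) + 1 with hKdef
  have hKpos : (0:ℝ) < K := by positivity
  have hmpos : (0:ℝ) < (m:ℝ) := by exact_mod_cast hm
  set ε : ℝ := (m:ℝ) / (K * C + 1) with hεdef
  have hεpos : 0 < ε := div_pos hmpos (by positivity)
  -- eventually y < ε
  have hsmall : ∀ᶠ s in nhdsWithin b (Set.Iio b), y s < ε :=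
    hylim.eventually_lt_const hεpos
  obtain ⟨a', ha'b, ha'sub⟩ := mem_nhdsLT_iff_exists_Ioo_subset.mp hsmall
  set a : ℝ := max a' 0 with hadef
  have hab : a < b := max_lt ha'b hb
  have ha0 : 0 ≤ a := le_max_right _ _
  -- membership helpers
  have hmem : ∀ s ∈ Set.Ioo a b, s ∈ Set.Ico (0:ℝ) b :=
    fun s hs => ⟨le_trans ha0 hs.1.le, hs.2⟩
  have hnhds : ∀ s ∈ Set.Ioo a b, Set.Ico (0:ℝ) b ∈ nhds s :=
    fun s hs => Filter.mem_of_superset (Ioo_mem_nhds (lt_of_le_of_lt ha0 hs.1) hs.2)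
      Set.Ioo_subset_Ico_self
  have hdy : ∀ s ∈ Set.Ioo a b, HasDerivAt y (y' s) s :=
    fun s hs => (hy s (hmem s hs)).hasDerivAt (hnhds s hs)
  have hdy' : ∀ s ∈ Set.Ioo a b, HasDerivAt y' (y'' s) s :=
    fun s hs => (hy' s (hmem s hs)).hasDerivAt (hnhds s hs)
  -- the key estimate: at zeros of y' inside (a,b), y'' ≥ 1
  have key : ∀ s ∈ Set.Ioo a b, y' s = 0 → 1 ≤ y'' s := by
    intro s hs h0
    have hsI := hmem s hs
    have hy0 := hypos s hsI
    have hx0 := hxpos s hsI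
    have hyε : y s < ε := ha'sub ⟨lt_of_le_of_lt (le_max_left a' 0) hs.1, hs.2⟩
    have hx2 : x' s ^ 2 = 1 := by
      have := hunit s hsI; rw [h0] at this; simpa using this
    have heqs := heq s hsI
    rw [h0] at heqs
    have h1 : y'' s = (m:ℝ) / y s - K * (H s * x' s) := by
      have hyne : y s ≠ 0 := ne_of_gt hy0
      have hxne : x s ≠ 0 := ne_of_gt hx0
      linear_combination (x' s) * heqs + ((m:ℝ) / y s - y'' s) * hx2
    have habs : |x' s| = 1 := by
      nlinarith [abs_nonneg (x' s), sq_abs (x' s)]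
    have hHb : |H s| ≤ C := hC s ⟨hsI.1, hsI.2.le⟩
    have hprod : K * (H s * x' s) ≤ K * C := by
      have : H s * x' s ≤ C := by
        calc H s * x' s ≤ |H s * x' s| := le_abs_self _
        _ = |H s| * |x' s| := abs_mul _ _
        _ = |H s| := by rw [habs, mul_one]
        _ ≤ C := hHb
      exact mul_le_mul_of_nonneg_left this hKpos.le
    have hdiv : K * C + 1 < (m:ℝ) / y s := by
      have h2 : (m:ℝ) / ε < (m:ℝ) / y s := div_lt_div_of_pos_left hmpos hy0 hyε
      have h3 : (m:ℝ) / ε = K * C + 1 := by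
        rw [hεdef]; field_simp
      linarith
    nlinarith [h1, hprod, hdiv]
  -- get a zero s0 of y' in (a,b)
  obtain ⟨s0, hs0z, hs0mem⟩ :=
    (hcon.and_eventually (Filter.eventually_mem_set.mpr
      (Ioo_mem_nhdsLT_of_mem (⟨hab, le_rfl⟩ : b ∈ Set.Ioc a b)))).exists
  -- y' > 0 on (s0, b)
  have pos : ∀ t ∈ Set.Ioo s0 b, 0 < y' t := by
    by_contra hneg
    push_neg at hneg
    obtain ⟨t, ht, ht0⟩ := hneg
    -- slope positivity to the right of s0
    have hslope0 := hasDerivAt_iff_tendsto_slope.mp (hdy' s0 hs0mem)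
    have hkey0 : 1 ≤ y'' s0 := key s0 hs0mem hs0z
    have hev0 : ∀ᶠ u in nhdsWithin s0 {s0}ᶜ, 0 < slope y' s0 u :=
      hslope0.eventually (lt_mem_nhds (by linarith))
    have hev0' : ∀ᶠ u in nhdsWithin s0 (Set.Ioi s0), 0 < y' u := by
      have := (hev0.filter_mono (nhdsWithin_mono s0 (fun u hu => ne_of_gt hu)))
      filter_upwards [this, self_mem_nhdsWithin] with u hu hu'
      rw [slope_def_field, hs0z] at hu
      have : 0 < u - s0 := sub_pos.mpr hu'
      have := hu
      rw [div_pos_iff] at this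
      rcases this with ⟨h1, _⟩ | ⟨_, h2⟩
      · simpa using h1
      · linarith [sub_pos.mpr (show s0 < u from hu')]
    obtain ⟨u', hu', hu'sub⟩ := mem_nhdsGT_iff_exists_Ioo_subset.mp hev0'
    have hu't : u' ≤ t := by
      by_contra hc
      push_neg at hc
      exact absurd (hu'sub ⟨ht.1, hc⟩) (not_lt.mpr ht0)
    have hu'lt : s0 < u' := hu'
    set c : ℝ := (s0 + u') / 2 with hcdef
    have hcmem : c ∈ Set.Ioo s0 u' := by
      constructor <;> (simp only [hcdef]; linarith)
    have hcpos : 0 < y' c := hu'sub hcmem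
    have hct : c < t := lt_of_lt_of_le hcmem.2 hu't
    -- continuity of y' on [c, t]
    have hsubIoo : Set.Icc c t ⊆ Set.Ioo a b := fun u hu =>
      ⟨lt_trans hs0mem.1 (lt_of_lt_of_le hcmem.1 hu.1), lt_of_le_of_lt hu.2 ht.2⟩
    have hcont : ContinuousOn y' (Set.Icc c t) := fun u hu =>
      ((hdy' u (hsubIoo hu)).continuousAt).continuousWithinAt
    -- first zero
    set S : Set ℝ := Set.Icc c t ∩ y' ⁻¹' Set.Iic 0 with hSdef
    have hScl : IsClosed S :=
      hcont.preimage_isClosed_of_isClosed isClosed_Icc isClosed_Iic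
    have hSne : S.Nonempty := ⟨t, ⟨hct.le, le_rfl⟩, ht0⟩
    have hSbdd : BddBelow S := ⟨c, fun u hu => hu.1.1⟩
    set s1 : ℝ := sInf S with hs1def
    have hs1S : s1 ∈ S := hScl.csInf_mem hSne hSbdd
    have hs1Icc : s1 ∈ Set.Icc c t := hs1S.1
    have hs1le : y' s1 ≤ 0 := hs1S.2
    have hcs1 : c < s1 := by
      rcases lt_or_eq_of_le hs1Icc.1 with h | h
      · exact h
      · exact absurd (h ▸ hs1le) (not_le.mpr hcpos)
    have hmin : ∀ u ∈ Set.Ico c s1, 0 < y' u := by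
      intro u hu
      by_contra hc2
      push_neg at hc2
      have : u ∈ S := ⟨⟨hu.1, le_trans hu.2.le hs1Icc.2⟩, hc2⟩
      exact absurd (csInf_le hSbdd this) (not_le.mpr hu.2)
    -- y' s1 = 0 by continuity from the left
    have hs1mem : s1 ∈ Set.Ioo a b := hsubIoo hs1Icc
    have hs1z : y' s1 = 0 := by
      have htend : Filter.Tendsto y' (nhdsWithin s1 (Set.Iio s1)) (nhds (y' s1)) :=
        ((hdy' s1 hs1mem).continuousAt).continuousWithinAt
      have hevge : ∀ᶠ u in nhdsWithin s1 (Set.Iio s1), 0 ≤ y' u := by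
        filter_upwards [Filter.eventually_mem_set.mpr
          (Ioo_mem_nhdsLT_of_mem (⟨hcs1, le_rfl⟩ : s1 ∈ Set.Ioc c s1))] with u hu
        exact (hmin u ⟨hu.1.le, hu.2⟩).le
      have := ge_of_tendsto htend hevge
      linarith
    -- contradiction via slope at s1
    have hkey1 : 1 ≤ y'' s1 := key s1 hs1mem hs1z
    have hslope1 := hasDerivAt_iff_tendsto_slope.mp (hdy' s1 hs1mem)
    have hev1 : ∀ᶠ u in nhdsWithin s1 {s1}ᶜ, 0 < slope y' s1 u :=
      hslope1.eventually (lt_mem_nhds (by linarith))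
    have hev1' : ∀ᶠ u in nhdsWithin s1 (Set.Iio s1), 0 < slope y' s1 u :=
      hev1.filter_mono (nhdsWithin_mono s1 (fun u hu => ne_of_lt hu))
    obtain ⟨u, hu1, hu2⟩ := (hev1'.and (Filter.eventually_mem_set.mpr
      (Ioo_mem_nhdsLT_of_mem (⟨hcs1, le_rfl⟩ : s1 ∈ Set.Ioc c s1)))).exists
    rw [slope_def_field, hs1z] at hu1
    have hneg1 : u - s1 < 0 := sub_neg.mpr hu2.2
    rw [div_pos_iff] at hu1
    rcases hu1 with ⟨_, h2⟩ | ⟨h1, _⟩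
    · linarith
    · have : 0 < y' u := hmin u ⟨hu2.1.le, hu2.2⟩
      simp only [sub_zero] at h1
      linarith
  -- y strictly increasing on [s0, b)
  have hs00 : s0 ∈ Set.Ico (0:ℝ) b := hmem s0 hs0mem
  have hmono : StrictMonoOn y (Set.Ico s0 b) := by
    apply strictMonoOn_of_deriv_pos (convex_Ico s0 b)
    · intro u hu
      exact ((hy u ⟨le_trans hs00.1 hu.1, hu.2⟩).continuousWithinAt).mono
        (fun v hv => ⟨le_trans hs00.1 hv.1, hv.2⟩)
    · intro u hu
      rw [interior_Ico] at hu
      have humem : u ∈ Set.Ioo a b := ⟨lt_trans hs0mem.1 hu.1, hu.2⟩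
      rw [(hdy u humem).deriv]
      exact pos u hu
  -- contradiction with y → 0
  have hys0 : 0 < y s0 := hypos s0 hs00
  have hevgt : ∀ᶠ s in nhdsWithin b (Set.Iio b), y s0 ≤ y s := by
    filter_upwards [Filter.eventually_mem_set.mpr
      (Ioo_mem_nhdsLT_of_mem (⟨hs0mem.2, le_rfl⟩ : b ∈ Set.Ioc s0 b))] with s hs
    exact (hmono ⟨le_rfl, hs0mem.2⟩ ⟨hs.1.le, hs.2⟩ hs.1).le
  have := ge_of_tendsto hylim hevgt
  linarith
end
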